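/- arXiv:2402.11044 — 4 statements merged into one kernel-verified Lean document; each statement's English description precedes it below -/
import Mathlib

section
/- Let k ≥ 3. In any decomposition of the complete graph K_{2k} into k+1 star-forests, no star-forest of the decomposition consists of a single star with at least one edge; that is, every star-forest in the decomposition that contains an edge has at least two connected components containing an edge. -/
/-- A star-forest: there is a set `C` of centers such that every edge has exactly one
endpoint in `C`, and every vertex outside `C` is incident to at most one edge.
Equivalently, every connected component of `G` is a star. -/
def IsStarForest {V : Type*} (G : SimpleGraph V) : Prop :=
  ∃ C : Set V, (∀ ⦃u v : V⦄, G.Adj u v → (u ∈ C ↔ v ∉ C)) ∧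
    ∀ v ∉ C, ∀ u w : V, G.Adj v u → G.Adj v w → u = w

/-- A decomposition of the complete graph on `V`: every edge (pair of distinct vertices)
lies in exactly one of the subgraphs `F i`. -/
def IsDecompositionOfComplete {V : Type*} {m : ℕ} (F : Fin m → SimpleGraph V) : Prop :=
  ∀ u v : V, u ≠ v → ∃! i : Fin m, (F i).Adj u v

/-- In any decomposition of `K_{2k}` (`k ≥ 3`) into `k + 1` star-forests, every
star-forest of the decomposition containing an edge has at least two connected components
containing an edge. -/
theorem no_single_star (k : ℕ) (hk : 3 ≤ k)
    (F : Fin (k + 1) → SimpleGraph (Fin (2 * k)))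
    (hdec : IsDecompositionOfComplete F) (hsf : ∀ i, IsStarForest (F i)) :
    ∀ i : Fin (k + 1), (∃ a b : Fin (2 * k), (F i).Adj a b) →
      ∃ a b a' b' : Fin (2 * k), (F i).Adj a b ∧ (F i).Adj a' b' ∧
        ¬ (F i).Reachable a a' := by
  classical
  intro i hedge
  by_contra hcon
  push_neg at hcon
  obtain ⟨a0, b0, hab0⟩ := hedge
  choose Cs hCs1 hCs2 using hsf
  -- pick an edge of `F i` whose first endpoint is a center
  obtain ⟨a, b, hab, haC⟩ : ∃ a b, (F i).Adj a b ∧ a ∈ Cs i := by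
    by_cases h : a0 ∈ Cs i
    · exact ⟨a0, b0, hab0, h⟩
    · refine ⟨b0, a0, hab0.symm, ?_⟩
      by_contra hb
      exact h ((hCs1 i hab0).mpr hb)
  have hstep : ∀ u v : Fin (2 * k), (u = a ∨ (F i).Adj a u) → (F i).Adj u v →
      (v = a ∨ (F i).Adj a v) := by
    intro u v hu huv
    rcases hu with rfl | hu
    · exact Or.inr huv
    · have hunC : u ∉ Cs i := (hCs1 i hu).mp haC
      exact Or.inl (hCs2 i u hunC a v hu.symm huv).symm
  have key : ∀ u : Fin (2 * k), (F i).Reachable a u → u = a ∨ (F i).Adj a u := by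
    intro u hr
    obtain ⟨w⟩ := hr
    have main : ∀ (x y : Fin (2 * k)) (w : (F i).Walk x y),
        (x = a ∨ (F i).Adj a x) → (y = a ∨ (F i).Adj a y) := by
      intro x y w
      induction w with
      | nil => exact id
      | cons h p ih => intro hx; exact ih (hstep _ _ hx h)
    exact main a u w (Or.inl rfl)
  -- every edge of `F i` contains `a`
  have hstar : ∀ u v : Fin (2 * k), (F i).Adj u v → u = a ∨ v = a := by
    intro u v huv
    have hu := key u (hcon a b u v hab huv)
    have hv := key v (hcon a b v u hab huv.symm)
    rcases hu with rfl | hu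
    · exact Or.inl rfl
    rcases hv with rfl | hv
    · exact Or.inr rfl
    · exfalso
      have hunC : u ∉ Cs i := (hCs1 i hu).mp haC
      have hvnC : v ∉ Cs i := (hCs1 i hv).mp haC
      exact hunC ((hCs1 i huv).mpr hvnC)
  -- the (unique) forest containing a given pair
  have hdec' : ∀ u v : Fin (2 * k), ∃ j, u ≠ v →
      (F j).Adj u v ∧ ∀ j', (F j').Adj u v → j' = j := by
    intro u v
    by_cases h : u = v
    · exact ⟨i, fun hne => absurd h hne⟩
    · obtain ⟨j, hj1, hj2⟩ := hdec u v h
      exact ⟨j, fun _ => ⟨hj1, hj2⟩⟩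
  choose jf hjf using hdec'
  have hjne : ∀ u v : Fin (2 * k), u ≠ a → v ≠ a → u ≠ v → jf u v ≠ i := by
    intro u v hu hv huv he
    have h1 := (hjf u v huv).1
    rw [he] at h1
    rcases hstar u v h1 with rfl | rfl
    · exact hu rfl
    · exact hv rfl
  have hjswap : ∀ u v : Fin (2 * k), u ≠ v → jf v u = jf u v := by
    intro u v huv
    exact (hjf u v huv).2 (jf v u) ((hjf v u (Ne.symm huv)).1).symm
  -- every vertex other than `a` is a center in some forest other than `i`
  have hjcex : ∀ v : Fin (2 * k), ∃ j, v ≠ a → j ≠ i ∧ v ∈ Cs j := by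
    intro v
    by_cases hva : v = a
    · exact ⟨i, fun h => absurd hva h⟩
    by_contra hno
    push_neg at hno
    have hvnC : ∀ j, j ≠ i → v ∉ Cs j := fun j => (hno j).2
    have hcard : ((Finset.univ.erase a).erase v).card ≤
        (Finset.univ.erase i : Finset (Fin (k + 1))).card := by
      apply Finset.card_le_card_of_injOn (fun u => jf v u)
      · intro u hu
        simp only [Finset.mem_coe, Finset.mem_erase, Finset.mem_univ, and_true] at hu ⊢
        exact hjne v u hva hu.2 (Ne.symm hu.1)
      · intro u1 h1 u2 h2 he
        simp only [Finset.mem_coe, Finset.mem_erase, Finset.mem_univ, and_true] at h1 h2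
        have hadj1 := (hjf v u1 (Ne.symm h1.1)).1
        have hadj2 := (hjf v u2 (Ne.symm h2.1)).1
        have he' : jf v u1 = jf v u2 := he
        rw [← he'] at hadj2
        exact hCs2 (jf v u1) v (hvnC _ (hjne v u1 hva h1.2 (Ne.symm h1.1))) u1 u2 hadj1 hadj2
    have hVc : (Finset.univ.erase a : Finset (Fin (2 * k))).card = 2 * k - 1 := by
      rw [Finset.card_erase_of_mem (Finset.mem_univ a), Finset.card_univ, Fintype.card_fin]
    have hVc2 : ((Finset.univ.erase a).erase v).card = 2 * k - 1 - 1 := by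
      rw [Finset.card_erase_of_mem (Finset.mem_erase.mpr ⟨hva, Finset.mem_univ v⟩), hVc]
    have hJc : (Finset.univ.erase i : Finset (Fin (k + 1))).card = k + 1 - 1 := by
      rw [Finset.card_erase_of_mem (Finset.mem_univ i), Finset.card_univ, Fintype.card_fin]
    omega
  choose jc hjc using hjcex
  -- the counting setup on the vertices other than `a` and forests other than `i`
  set Vs : Finset (Fin (2 * k)) := Finset.univ.erase a with hVs
  set Js : Finset (Fin (k + 1)) := Finset.univ.erase i with hJs
  have hmemVs : ∀ v : Fin (2 * k), v ∈ Vs ↔ v ≠ a := by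
    intro v; rw [hVs, Finset.mem_erase]; simp
  have hmemJs : ∀ j : Fin (k + 1), j ∈ Js ↔ j ≠ i := by
    intro j; rw [hJs, Finset.mem_erase]; simp
  have hVcard : Vs.card = 2 * k - 1 := by
    rw [hVs, Finset.card_erase_of_mem (Finset.mem_univ a), Finset.card_univ, Fintype.card_fin]
  have hJcard : Js.card = k := by
    rw [hJs, Finset.card_erase_of_mem (Finset.mem_univ i), Finset.card_univ, Fintype.card_fin]
    omega
  set D : Finset (Fin (2 * k) × Fin (2 * k)) := Vs.offDiag with hD
  have hmemD : ∀ p : Fin (2 * k) × Fin (2 * k),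
      p ∈ D ↔ (p.1 ≠ a ∧ p.2 ≠ a ∧ p.1 ≠ p.2) := by
    intro p
    rw [hD, Finset.mem_offDiag, hmemVs, hmemVs]
  set P : Fin (2 * k) × Fin (2 * k) → Prop := fun p => p.1 ∉ Cs (jf p.1 p.2) with hP
  set L : Finset (Fin (2 * k) × Fin (2 * k)) := D.filter P with hL
  have hswap : ∀ p ∈ D, (P p ↔ ¬ P p.swap) := by
    intro p hp
    obtain ⟨h1, h2, h12⟩ := (hmemD p).mp hp
    have hj : jf p.2 p.1 = jf p.1 p.2 := hjswap p.1 p.2 h12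
    have hiff := hCs1 (jf p.1 p.2) (hjf p.1 p.2 h12).1
    simp only [hP, Prod.fst_swap, Prod.snd_swap, hj]
    tauto
  have hDswap : ∀ p ∈ D, p.swap ∈ D := by
    intro p hp
    obtain ⟨h1, h2, h12⟩ := (hmemD p).mp hp
    exact (hmemD p.swap).mpr ⟨h2, h1, Ne.symm h12⟩
  have hDsplit : D.filter (fun p => ¬ P p) = L.image Prod.swap := by
    ext q
    simp only [hL, Finset.mem_filter, Finset.mem_image]
    constructor
    · rintro ⟨hqD, hq⟩
      have h1 := hswap q.swap (hDswap q hqD)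
      rw [Prod.swap_swap] at h1
      exact ⟨q.swap, ⟨hDswap q hqD, by tauto⟩, Prod.swap_swap q⟩
    · rintro ⟨p, ⟨hpD, hpP⟩, rfl⟩
      exact ⟨hDswap p hpD, (hswap p hpD).mp hpP⟩
  have hcardD : D.card = 2 * L.card := by
    have h1 := Finset.card_filter_add_card_filter_not (s := D) P
    rw [hDsplit, Finset.card_image_of_injective L Prod.swap_injective] at h1
    have h2 : Finset.filter P D = L := hL.symm
    rw [h2] at h1
    omega
  have hDcard : D.card = Vs.card * Vs.card - Vs.card := by
    rw [hD, Finset.offDiag_card]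
  set Tc : Finset (Fin (2 * k) × Fin (k + 1)) :=
    (Vs ×ˢ Js).filter (fun q => q.1 ∈ Cs q.2) with hTc
  set T : Finset (Fin (2 * k) × Fin (k + 1)) :=
    (Vs ×ˢ Js).filter (fun q => q.1 ∉ Cs q.2) with hT
  have hLT : L.card ≤ T.card := by
    apply Finset.card_le_card_of_injOn (fun p => (p.1, jf p.1 p.2))
    · intro p hp
      obtain ⟨hpD, hpP⟩ := Finset.mem_filter.mp hp
      obtain ⟨h1, h2, h12⟩ := (hmemD p).mp hpD
      rw [hT]
      refine Finset.mem_filter.mpr ⟨Finset.mem_product.mpr ⟨?_, ?_⟩, hpP⟩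
      · exact (hmemVs p.1).mpr h1
      · exact (hmemJs (jf p.1 p.2)).mpr (hjne p.1 p.2 h1 h2 h12)
    · intro p hp q hq he
      simp only [Finset.mem_coe] at hp hq
      obtain ⟨hpD, hpP⟩ := Finset.mem_filter.mp hp
      obtain ⟨hqD, hqP⟩ := Finset.mem_filter.mp hq
      obtain ⟨hp1, hp2, hp12⟩ := (hmemD p).mp hpD
      obtain ⟨hq1, hq2, hq12⟩ := (hmemD q).mp hqD
      have he' : (p.1, jf p.1 p.2) = (q.1, jf q.1 q.2) := he
      have h12 : p.1 = q.1 ∧ jf p.1 p.2 = jf q.1 q.2 := by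
        rw [Prod.ext_iff] at he'
        exact he'
      obtain ⟨h1, h2⟩ := h12
      have hadjp := (hjf p.1 p.2 hp12).1
      have hadjq := (hjf q.1 q.2 hq12).1
      rw [← h2] at hadjq
      rw [← h1] at hadjq
      have hpP' : p.1 ∉ Cs (jf p.1 p.2) := hpP
      have h3 : p.2 = q.2 := hCs2 (jf p.1 p.2) p.1 hpP' p.2 q.2 hadjp hadjq
      exact Prod.ext_iff.mpr ⟨h1, h3⟩
  have hsum : Tc.card + T.card = Vs.card * Js.card := by
    rw [hTc, hT, ← Finset.card_product]
    exact Finset.card_filter_add_card_filter_not (fun q : Fin (2 * k) × Fin (k + 1) => q.1 ∈ Cs q.2)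
  have hmapsto : ∀ v ∈ Vs, (v, jc v) ∈ Tc := by
    intro v hv
    have hva : v ≠ a := (hmemVs v).mp hv
    obtain ⟨hji, hvC⟩ := hjc v hva
    rw [hTc]
    exact Finset.mem_filter.mpr ⟨Finset.mem_product.mpr ⟨hv, (hmemJs (jc v)).mpr hji⟩, hvC⟩
  have hinj : Set.InjOn (fun v : Fin (2 * k) => (v, jc v)) ↑Vs := by
    intro x _ y _ he
    have he' : (x, jc x) = (y, jc y) := he
    rw [Prod.ext_iff] at he'
    exact he'.1
  have hTc_ge : Vs.card ≤ Tc.card :=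
    Finset.card_le_card_of_injOn (fun v => (v, jc v)) hmapsto hinj
  have hceq : 2 * k = Vs.card + 1 := by omega
  have h2ck : 2 * (Vs.card * Js.card) = Vs.card * Vs.card + Vs.card := by
    rw [hJcard]
    calc 2 * (Vs.card * k) = Vs.card * (2 * k) := by ring
      _ = Vs.card * (Vs.card + 1) := congrArg (fun n => Vs.card * n) hceq
      _ = Vs.card * Vs.card + Vs.card := by ring
  have hTc_le : Tc.card ≤ Vs.card := by
    have hle : Vs.card ≤ Vs.card * Vs.card := Nat.le_mul_of_pos_left _ (by omega)
    generalize hA : Vs.card * Vs.card = A at hle hDcard h2ck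
    generalize hB : Vs.card * Js.card = B at h2ck hsum
    omega
  have himg : Finset.image (fun v => (v, jc v)) Vs = Tc := by
    apply Finset.eq_of_subset_of_card_le
    · intro q hq
      obtain ⟨v, hv, rfl⟩ := Finset.mem_image.mp hq
      exact hmapsto v hv
    · rw [Finset.card_image_of_injOn hinj]
      exact hTc_le
  have huniq : ∀ v : Fin (2 * k), v ≠ a → ∀ j, j ≠ i → v ∈ Cs j → j = jc v := by
    intro v hva j hji hvC
    have hq : (v, j) ∈ Tc := by
      rw [hTc]
      exact Finset.mem_filter.mpr
        ⟨Finset.mem_product.mpr ⟨(hmemVs v).mpr hva, (hmemJs j).mpr hji⟩, hvC⟩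
    rw [← himg] at hq
    obtain ⟨w, hw, hwe⟩ := Finset.mem_image.mp hq
    have hwe' : (w, jc w) = (v, j) := hwe
    rw [Prod.ext_iff] at hwe'
    obtain ⟨h1, h2⟩ := hwe'
    have h1' : w = v := h1
    have h2' : jc w = j := h2
    rw [h1'] at h2'
    exact h2'.symm
  -- pigeonhole: two vertices share the same center-forest
  have hlt : Js.card < Vs.card := by omega
  obtain ⟨u, hu, v, hv, huv, hjeq⟩ :=
    Finset.exists_ne_map_eq_of_card_lt_of_maps_to hlt (f := jc) (fun v hv =>
      (hmemJs (jc v)).mpr (hjc v ((hmemVs v).mp hv)).1)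
  have hua : u ≠ a := (hmemVs u).mp hu
  have hva : v ≠ a := (hmemVs v).mp hv
  have hadj : (F (jf u v)).Adj u v := (hjf u v huv).1
  have hji : jf u v ≠ i := hjne u v hua hva huv
  have hiff := hCs1 (jf u v) hadj
  by_cases hu1 : u ∈ Cs (jf u v)
  · have hvn : v ∉ Cs (jf u v) := hiff.mp hu1
    have heq : jf u v = jc u := huniq u hua (jf u v) hji hu1
    rw [heq, hjeq] at hvn
    exact hvn (hjc v hva).2
  · have hv1 : v ∈ Cs (jf u v) := by
      by_contra hv1
      exact hu1 (hiff.mpr hv1)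
    have heq : jf u v = jc v := huniq v hva (jf u v) hji hv1
    rw [heq, ← hjeq] at hu1
    exact hu1 (hjc u hua).2
end

section
/- Let k ≥ 3. In any decomposition of the complete graph K_{2k} into k+1 star-forests, at least one star-forest of the decomposition has exactly two connected components containing an edge. -/
open Finset

set_option linter.unusedSectionVars false
set_option maxHeartbeats 1000000

section Helpers
open scoped Classical

variable {V : Type*} [Fintype V] [DecidableEq V]

noncomputable def dg (G : SimpleGraph V) (v : V) : ℕ :=
  (Finset.univ.filter (fun u => G.Adj v u)).card

lemma dg_pos_iff (G : SimpleGraph V) (v : V) : 0 < dg G v ↔ ∃ u, G.Adj v u := by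
  simp [dg, card_pos, filter_nonempty_iff]

lemma dg_le_one_of_not_center {G : SimpleGraph V} {C : Set V}
    (hC2 : ∀ v ∉ C, ∀ u w : V, G.Adj v u → G.Adj v w → u = w)
    {v : V} (hv : v ∉ C) : dg G v ≤ 1 := by
  apply Finset.card_le_one.2
  intro a ha b hb
  simp only [mem_filter] at ha hb
  exact hC2 v hv a b ha.2 hb.2

lemma mem_center_of_two_le {G : SimpleGraph V} {C : Set V}
    (hC2 : ∀ v ∉ C, ∀ u w : V, G.Adj v u → G.Adj v w → u = w)
    {v : V} (h : 2 ≤ dg G v) : v ∈ C := by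
  by_contra hv
  have := dg_le_one_of_not_center hC2 hv
  omega

lemma sum_center_eq_sum_noncenter {G : SimpleGraph V} {C : Set V}
    (hC1 : ∀ ⦃u v : V⦄, G.Adj u v → (u ∈ C ↔ v ∉ C)) :
    ∑ v ∈ univ.filter (fun v => v ∈ C), dg G v
      = ∑ v ∈ univ.filter (fun v => v ∉ C), dg G v := by
  have key : ∀ (u : V), ((univ.filter (fun v => v ∈ C)).filter (fun v => G.Adj v u)).card
      = if u ∉ C then dg G u else 0 := by
    intro u
    split_ifs with hu
    · rw [Finset.card_eq_zero, Finset.filter_eq_empty_iff]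
      rintro v hv hadj
      simp only [mem_filter] at hv
      exact ((hC1 hadj).1 hv.2) hu
    · unfold dg
      congr 1
      ext v
      simp only [mem_filter, mem_univ, true_and, filter_filter]
      constructor
      · rintro ⟨-, h⟩; exact h.symm
      · intro h
        exact ⟨((hC1 h.symm).2 hu : v ∈ C), h.symm⟩
  calc ∑ v ∈ univ.filter (fun v => v ∈ C), dg G v
      = ∑ v ∈ univ.filter (fun v => v ∈ C), ∑ u : V, (if G.Adj v u then 1 else 0) := by
        apply Finset.sum_congr rfl; intro v _; rw [dg, Finset.card_filter]
    _ = ∑ u : V, ∑ v ∈ univ.filter (fun v => v ∈ C), (if G.Adj v u then 1 else 0) := by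
        rw [Finset.sum_comm]
    _ = ∑ u : V, ((univ.filter (fun v => v ∈ C)).filter (fun v => G.Adj v u)).card := by
        apply Finset.sum_congr rfl; intro u _; rw [Finset.card_filter]
    _ = ∑ u : V, (if u ∉ C then dg G u else 0) := by
        apply Finset.sum_congr rfl; intro u _; exact key u
    _ = ∑ u ∈ univ.filter (fun u => u ∉ C), dg G u := by
        rw [Finset.sum_ite, Finset.sum_const_zero, add_zero, Finset.sum_filter]

lemma sum_dg_eq_card_active {G : SimpleGraph V} (s : Finset V)
    (h : ∀ v ∈ s, dg G v ≤ 1) :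
    ∑ v ∈ s, dg G v = (s.filter (fun v => ∃ u, G.Adj v u)).card := by
  rw [Finset.card_filter]
  apply Finset.sum_congr rfl
  intro v hv
  have h1 := h v hv
  have hiff : (∃ u, G.Adj v u) ↔ 0 < dg G v := (dg_pos_iff G v).symm
  by_cases hex : ∃ u, G.Adj v u
  · have := hiff.1 hex; simp [hex]; omega
  · have h0 : dg G v = 0 := by
      rcases Nat.eq_zero_or_pos (dg G v) with h0 | h0
      · exact h0
      · exact absurd (hiff.2 h0) hex
    simp [hex, h0]

lemma walk_center_eq {G : SimpleGraph V} {C : Set V}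
    (hC1 : ∀ ⦃u v : V⦄, G.Adj u v → (u ∈ C ↔ v ∉ C))
    (hC2 : ∀ v ∉ C, ∀ u w : V, G.Adj v u → G.Adj v w → u = w) :
    ∀ (n : ℕ) {u v : V} (p : G.Walk u v), p.length ≤ n → u ∈ C → v ∈ C → u = v := by
  intro n
  induction n with
  | zero =>
    intro u v p hp hu hv
    cases p with
    | nil => rfl
    | cons h q => simp [SimpleGraph.Walk.length_cons] at hp
  | succ n ih =>
    intro u v p hp hu hv
    cases p with
    | nil => rfl
    | @cons _ w _ h q =>
      have hw : w ∉ C := (hC1 h).1 hu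
      cases q with
      | nil => exact absurd hv hw
      | @cons _ x _ h' r =>
        have hx : u = x := hC2 w hw u x h.symm h'
        have hlen : (r.copy hx.symm rfl).length ≤ n := by
          simp only [SimpleGraph.Walk.length_copy]
          simp only [SimpleGraph.Walk.length_cons] at hp
          omega
        exact ih (r.copy hx.symm rfl) hlen hu hv

lemma comp_count {G : SimpleGraph V} {C : Set V}
    (hC1 : ∀ ⦃u v : V⦄, G.Adj u v → (u ∈ C ↔ v ∉ C))
    (hC2 : ∀ v ∉ C, ∀ u w : V, G.Adj v u → G.Adj v w → u = w) :
    {K : G.ConnectedComponent | ∃ a b, G.Adj a b ∧ G.connectedComponentMk a = K}.ncard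
      = (univ.filter (fun v => v ∈ C ∧ ∃ u, G.Adj v u)).card := by
  have hset : {K : G.ConnectedComponent | ∃ a b, G.Adj a b ∧ G.connectedComponentMk a = K}
      = G.connectedComponentMk '' {v | v ∈ C ∧ ∃ u, G.Adj v u} := by
    ext K
    constructor
    · rintro ⟨a, b, hab, rfl⟩
      by_cases ha : a ∈ C
      · exact ⟨a, ⟨ha, b, hab⟩, rfl⟩
      · have hb : b ∈ C := by
          by_contra hbC
          exact ha ((hC1 hab).2 hbC)
        exact ⟨b, ⟨hb, a, hab.symm⟩, SimpleGraph.ConnectedComponent.sound hab.symm.reachable⟩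
    · rintro ⟨v, ⟨hv, u, hvu⟩, rfl⟩
      exact ⟨v, u, hvu, rfl⟩
  have hinj : Set.InjOn G.connectedComponentMk {v | v ∈ C ∧ ∃ u, G.Adj v u} := by
    rintro a ⟨ha, -⟩ b ⟨hb, -⟩ hab
    have hre : G.Reachable a b := SimpleGraph.ConnectedComponent.exact hab
    exact hre.elim fun p => walk_center_eq hC1 hC2 p.length p le_rfl ha hb
  rw [hset, Set.ncard_image_of_injOn hinj]
  rw [Set.ncard_eq_toFinset_card']
  simp [Set.toFinset_setOf]

lemma sum_card_filter_swap {α β : Type*} [Fintype α] [Fintype β] (P : α → β → Prop) :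
    ∑ b : β, (univ.filter fun a => P a b).card
      = ∑ a : α, (univ.filter fun b => P a b).card := by
  simp only [Finset.card_filter]
  rw [Finset.sum_comm]

lemma sum_dg_forests {m : ℕ} (F : Fin m → SimpleGraph V)
    (hdec : IsDecompositionOfComplete F) (v : V) :
    ∑ i, dg (F i) v = Fintype.card V - 1 := by
  classical
  have hdisj : (↑(univ : Finset (Fin m)) : Set (Fin m)).PairwiseDisjoint
      (fun i => univ.filter (fun u => (F i).Adj v u)) := by
    intro i _ j _ hij
    simp only [Finset.disjoint_left, mem_filter, mem_univ, true_and]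
    intro u hiu hju
    rcases hdec v u (hiu.ne) with ⟨l, -, huniq⟩
    exact hij ((huniq i hiu).trans (huniq j hju).symm)
  have hcard := Finset.card_biUnion (fun i _ => fun j _ hij => hdisj (mem_coe.2 (mem_univ i)) (mem_coe.2 (mem_univ j)) hij)
    (s := (univ : Finset (Fin m))) (t := fun i => univ.filter (fun u => (F i).Adj v u))
  have hun : (univ : Finset (Fin m)).biUnion (fun i => univ.filter (fun u => (F i).Adj v u))
      = univ.erase v := by
    ext u
    simp only [mem_biUnion, mem_filter, mem_univ, true_and, mem_erase, and_true]
    constructor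
    · rintro ⟨i, h⟩; exact h.ne'
    · intro h
      rcases hdec v u (Ne.symm h) with ⟨i, hi, -⟩
      exact ⟨i, hi⟩
  calc ∑ i, dg (F i) v = ((univ : Finset (Fin m)).biUnion
        (fun i => univ.filter (fun u => (F i).Adj v u))).card := hcard.symm
    _ = (univ.erase v).card := by rw [hun]
    _ = Fintype.card V - 1 := by rw [Finset.card_erase_of_mem (mem_univ v), Finset.card_univ]

end Helpers

open scoped Classical in
/-- In any decomposition of `K_{2k}` (`k ≥ 3`) into `k + 1` star-forests, some star-forest
of the decomposition has exactly two connected components containing an edge. -/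
theorem exists_two_component_star_forest (k : ℕ) (hk : 3 ≤ k)
    (F : Fin (k + 1) → SimpleGraph (Fin (2 * k)))
    (hdec : IsDecompositionOfComplete F) (hsf : ∀ i, IsStarForest (F i)) :
    ∃ i : Fin (k + 1),
      {C : (F i).ConnectedComponent |
        ∃ a b : Fin (2 * k), (F i).Adj a b ∧ (F i).connectedComponentMk a = C}.ncard = 2 := by
  by_contra hcon
  push_neg at hcon
  choose C hC1 hC2 using hsf
  have hcardV : Fintype.card (Fin (2 * k)) = 2 * k := by simp
  set c : Fin (k + 1) → ℕ :=
    fun i => (univ.filter (fun v : Fin (2 * k) => v ∈ C i ∧ ∃ u, (F i).Adj v u)).card with hc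
  set e : Fin (k + 1) → ℕ :=
    fun i => (univ.filter (fun v : Fin (2 * k) => v ∉ C i ∧ ∃ u, (F i).Adj v u)).card with he
  set z : Fin (k + 1) → ℕ :=
    fun i => (univ.filter (fun v : Fin (2 * k) => ¬ ∃ u, (F i).Adj v u)).card with hz
  set b : Fin (k + 1) → ℕ :=
    fun i => (univ.filter (fun v : Fin (2 * k) => 2 ≤ dg (F i) v)).card with hb
  set m : Fin (2 * k) → ℕ :=
    fun v => (univ.filter (fun i : Fin (k + 1) => 2 ≤ dg (F i) v)).card with hm
  -- c i ≠ 2 from the contradiction hypothesis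
  have H12 : ∀ i, c i ≠ 2 := by
    intro i h2
    apply hcon i
    rw [comp_count (hC1 i) (hC2 i)]
    simp only [hc] at h2
    convert h2
  -- per-vertex degree sum
  have H1 : ∀ v : Fin (2 * k), ∑ i, dg (F i) v = 2 * k - 1 := by
    intro v
    rw [sum_dg_forests F hdec v, hcardV]
  -- partition identity
  have H2 : ∀ i, c i + e i + z i = 2 * k := by
    intro i
    have h1 := Finset.card_filter_add_card_filter_not
      (s := (univ : Finset (Fin (2 * k)))) (p := fun v => ∃ u, (F i).Adj v u)
    have h2 := Finset.card_filter_add_card_filter_not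
      (s := univ.filter (fun v : Fin (2 * k) => ∃ u, (F i).Adj v u)) (p := fun v => v ∈ C i)
    rw [Finset.filter_filter, Finset.filter_filter] at h2
    rw [Finset.card_univ, hcardV] at h1
    have hcc : c i = (univ.filter (fun v : Fin (2 * k) => (∃ u, (F i).Adj v u) ∧ v ∈ C i)).card := by
      simp only [hc]; congr 1; ext v; simp only [mem_filter]; tauto
    have hee : e i = (univ.filter (fun v : Fin (2 * k) => (∃ u, (F i).Adj v u) ∧ ¬ v ∈ C i)).card := by
      simp only [he]; congr 1; ext v; simp only [mem_filter]; tauto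
    have hzz : z i = (univ.filter (fun v : Fin (2 * k) => ¬ ∃ u, (F i).Adj v u)).card := by
      simp only [hz]
    rw [hcc, hee, hzz]
    omega
  -- degree sum per forest = 2 * e i
  have H3 : ∀ i, ∑ v : Fin (2 * k), dg (F i) v = 2 * e i := by
    intro i
    have hsplit := Finset.sum_filter_add_sum_filter_not (univ : Finset (Fin (2 * k)))
      (fun v => v ∈ C i) (fun v => dg (F i) v)
    have hswap := sum_center_eq_sum_noncenter (hC1 i)
    have hnc : ∑ v ∈ univ.filter (fun v : Fin (2 * k) => v ∉ C i), dg (F i) v = e i := by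
      rw [sum_dg_eq_card_active _ (fun v hv => dg_le_one_of_not_center (hC2 i)
        (by simpa using (mem_filter.1 hv).2))]
      simp only [he, Finset.filter_filter]
      congr
    omega
  -- Σ (c+z) = 3k
  have H5 : ∑ i, (c i + z i) = 3 * k := by
    have h2 : ∑ i, (c i + e i + z i) = (k + 1) * (2 * k) := by
      rw [Finset.sum_congr rfl (fun i _ => H2 i)]
      simp [mul_comm]
    have hsum : ∑ i, (c i + e i + z i) = ∑ i, (c i + z i) + ∑ i, e i := by
      rw [← Finset.sum_add_distrib]
      apply Finset.sum_congr rfl; intro i _; ring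
    have he2 : 2 * (∑ i, e i) = 2 * k * (2 * k - 1) := by
      rw [Finset.mul_sum]
      have : ∑ i, 2 * e i = ∑ i, ∑ v : Fin (2 * k), dg (F i) v := by
        apply Finset.sum_congr rfl; intro i _; rw [H3 i]
      rw [this, Finset.sum_comm, Finset.sum_congr rfl (fun v _ => H1 v)]
      simp [hcardV, mul_comm]
    have hA : ((∑ i, (c i + z i) : ℕ) : ℤ) + ((∑ i, e i : ℕ) : ℤ) = ((k : ℤ) + 1) * (2 * k) := by
      rw [hsum] at h2
      exact_mod_cast congrArg (Nat.cast : ℕ → ℤ) h2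
    have hB : 2 * ((∑ i, e i : ℕ) : ℤ) = 2 * (k : ℤ) * (2 * k - 1) := by
      have h1k : (1 : ℕ) ≤ 2 * k := by omega
      zify [h1k] at he2
      exact_mod_cast he2
    have hgoal : (2 * (∑ i, (c i + z i) : ℕ) : ℤ) = 6 * (k : ℤ) := by
      linear_combination 2 * hA - hB
    exact_mod_cast (by linarith : ((∑ i, (c i + z i) : ℕ) : ℤ) = 3 * (k : ℤ))
  -- every vertex is a big center somewhere
  have H6 : ∀ v : Fin (2 * k), 1 ≤ m v := by
    intro v
    simp only [hm]
    rw [Nat.one_le_iff_ne_zero]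
    intro h0
    rw [Finset.card_eq_zero, Finset.filter_eq_empty_iff] at h0
    have hbound : ∀ i : Fin (k+1), dg (F i) v ≤ 1 := by
      intro i
      have := h0 (mem_univ i)
      omega
    have h1 := H1 v
    have hle : ∑ i, dg (F i) v ≤ ∑ _i : Fin (k+1), 1 :=
      Finset.sum_le_sum (fun i _ => hbound i)
    simp at hle
    omega
  -- swap
  have H7 : ∑ v : Fin (2 * k), m v = ∑ i, b i := by
    simp only [hm, hb, Finset.card_filter]
    rw [Finset.sum_comm]
  -- two huge stars in one forest is impossible
  have Hbig : ∀ (i : Fin (k+1)) (u w : Fin (2*k)), u ≠ w →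
      k - 1 ≤ dg (F i) u → k - 1 ≤ dg (F i) w →
      2 ≤ dg (F i) u → 2 ≤ dg (F i) w → False := by
    intro i u w huw hdu hdw h2u h2w
    have huC := mem_center_of_two_le (hC2 i) h2u
    have hwC := mem_center_of_two_le (hC2 i) h2w
    have hact : ∀ x : Fin (2*k), 2 ≤ dg (F i) x → ∃ y, (F i).Adj x y := by
      intro x hx
      rw [← dg_pos_iff]
      omega
    set A := univ.filter (fun v : Fin (2*k) => v ∈ C i ∧ ∃ x, (F i).Adj v x) with hA
    have huA : u ∈ A := by
      simp only [hA, mem_filter, mem_univ, true_and]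
      exact ⟨huC, hact u h2u⟩
    have hwA : w ∈ A.erase u := by
      rw [Finset.mem_erase]
      refine ⟨Ne.symm huw, ?_⟩
      simp only [hA, mem_filter, mem_univ, true_and]
      exact ⟨hwC, hact w h2w⟩
    have hAcard : A.card = c i := by simp only [hA, hc]
    -- e i = sum of degrees over centers
    have hec : ∑ v ∈ univ.filter (fun v : Fin (2*k) => v ∈ C i), dg (F i) v = e i := by
      rw [sum_center_eq_sum_noncenter (hC1 i)]
      rw [sum_dg_eq_card_active _ (fun v hv => dg_le_one_of_not_center (hC2 i)
        (by simpa using (mem_filter.1 hv).2))]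
      simp only [he, Finset.filter_filter]
      congr
    -- lower bound the sum
    have hsub : A ⊆ univ.filter (fun v : Fin (2*k) => v ∈ C i) := by
      intro x hx
      simp only [hA, mem_filter, mem_univ, true_and] at hx ⊢
      exact hx.1
    have hge1 : ∑ v ∈ A, dg (F i) v ≤ ∑ v ∈ univ.filter (fun v : Fin (2*k) => v ∈ C i), dg (F i) v :=
      Finset.sum_le_sum_of_subset hsub
    have hsplit1 : dg (F i) u + ∑ v ∈ A.erase u, dg (F i) v = ∑ v ∈ A, dg (F i) v :=
      Finset.add_sum_erase A (fun v => dg (F i) v) huA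
    have hsplit2 : dg (F i) w + ∑ v ∈ (A.erase u).erase w, dg (F i) v
        = ∑ v ∈ A.erase u, dg (F i) v :=
      Finset.add_sum_erase (A.erase u) (fun v => dg (F i) v) hwA
    have hrest : ((A.erase u).erase w).card ≤ ∑ v ∈ (A.erase u).erase w, dg (F i) v := by
      have : ∀ v ∈ (A.erase u).erase w, 1 ≤ dg (F i) v := by
        intro v hv
        have hvA : v ∈ A := Finset.mem_of_mem_erase (Finset.mem_of_mem_erase hv)
        simp only [hA, mem_filter, mem_univ, true_and] at hvA
        rw [Nat.one_le_iff_ne_zero, ← Nat.pos_iff_ne_zero, dg_pos_iff]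
        exact hvA.2
      calc ((A.erase u).erase w).card = ∑ _v ∈ (A.erase u).erase w, 1 := by simp
        _ ≤ ∑ v ∈ (A.erase u).erase w, dg (F i) v := Finset.sum_le_sum this
    have hcarderase : ((A.erase u).erase w).card = A.card - 2 := by
      rw [Finset.card_erase_of_mem hwA, Finset.card_erase_of_mem huA]
      omega
    have hA2 : 2 ≤ A.card := by
      have h1 : 1 ≤ (A.erase u).card := Finset.card_pos.2 ⟨w, hwA⟩
      have := Finset.card_erase_of_mem huA
      omega
    have hH2 := H2 i
    have hH12 := H12 i
    omega
  -- for an m v = 1 vertex, its unique big star is huge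
  have Hkey : ∀ v : Fin (2*k), m v = 1 → ∀ i : Fin (k+1), 2 ≤ dg (F i) v →
      k - 1 ≤ dg (F i) v := by
    intro v hv i hi
    have hcard : (univ.filter (fun l : Fin (k+1) => 2 ≤ dg (F l) v)).card = 1 := by
      simpa only [hm] using hv
    obtain ⟨j, hj⟩ := Finset.card_eq_one.mp hcard
    have hij : i = j := by
      have : i ∈ univ.filter (fun l : Fin (k+1) => 2 ≤ dg (F l) v) := by
        simp only [mem_filter, mem_univ, true_and]; exact hi
      rw [hj, Finset.mem_singleton] at this
      exact this
    have hbound : ∀ l ∈ univ.erase i, dg (F l) v ≤ 1 := by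
      intro l hl
      rw [Finset.mem_erase] at hl
      by_contra hb2
      push_neg at hb2
      have : l ∈ univ.filter (fun l : Fin (k+1) => 2 ≤ dg (F l) v) := by
        simp only [mem_filter, mem_univ, true_and]; omega
      rw [hj, Finset.mem_singleton] at this
      exact hl.1 (this.trans hij.symm)
    have hsumb : ∑ l ∈ univ.erase i, dg (F l) v ≤ (univ.erase i).card * 1 := by
      calc ∑ l ∈ univ.erase i, dg (F l) v ≤ ∑ _l ∈ univ.erase i, 1 :=
            Finset.sum_le_sum hbound
        _ = (univ.erase i).card * 1 := by simp
    have hcarde : (univ.erase i).card = k := by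
      rw [Finset.card_erase_of_mem (mem_univ i), Finset.card_univ, Fintype.card_fin]
      omega
    have hadd : dg (F i) v + ∑ l ∈ univ.erase i, dg (F l) v = ∑ l, dg (F l) v :=
      Finset.add_sum_erase univ (fun l => dg (F l) v) (mem_univ i)
    have hs := H1 v
    omega
  -- the injection: #{v : m v = 1} ≤ k + 1
  have H8 : (univ.filter (fun v : Fin (2 * k) => m v = 1)).card ≤ k + 1 := by
    classical
    set f : Fin (2*k) → Fin (k+1) :=
      fun v => if h : ∃ i : Fin (k+1), 2 ≤ dg (F i) v then h.choose else 0 with hf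
    have hinj : Set.InjOn f (univ.filter (fun v : Fin (2 * k) => m v = 1)) := by
      intro u hu w hw hfuw
      by_contra huw
      rw [Finset.coe_filter] at hu hw
      have hmu : m u = 1 := hu.2
      have hmw : m w = 1 := hw.2
      have hexu : ∃ i : Fin (k+1), 2 ≤ dg (F i) u := by
        have : 0 < (univ.filter (fun l : Fin (k+1) => 2 ≤ dg (F l) u)).card := by
          have : (univ.filter (fun l : Fin (k+1) => 2 ≤ dg (F l) u)).card = 1 := by
            simpa only [hm] using hmu
          omega
        rw [Finset.card_pos] at this
        obtain ⟨i, hi⟩ := this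
        exact ⟨i, (mem_filter.1 hi).2⟩
      have hexw : ∃ i : Fin (k+1), 2 ≤ dg (F i) w := by
        have : 0 < (univ.filter (fun l : Fin (k+1) => 2 ≤ dg (F l) w)).card := by
          have : (univ.filter (fun l : Fin (k+1) => 2 ≤ dg (F l) w)).card = 1 := by
            simpa only [hm] using hmw
          omega
        rw [Finset.card_pos] at this
        obtain ⟨i, hi⟩ := this
        exact ⟨i, (mem_filter.1 hi).2⟩
      have hfu : f u = hexu.choose := by simp only [hf, dif_pos hexu]
      have hfw : f w = hexw.choose := by simp only [hf, dif_pos hexw]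
      have h2u : 2 ≤ dg (F (f u)) u := by rw [hfu]; exact hexu.choose_spec
      have h2w : 2 ≤ dg (F (f u)) w := by rw [hfuw, hfw]; exact hexw.choose_spec
      exact Hbig (f u) u w huw (Hkey u hmu (f u) h2u) (Hkey w hmw (f u) h2w) h2u h2w
    have := Finset.card_le_card_of_injOn f (fun v _ => Finset.mem_univ (f v)) hinj
    simpa using this
  -- Σ b ≥ 3k - 1
  have H9 : 3 * k - 1 ≤ ∑ i, b i := by
    have hpt : ∀ v : Fin (2 * k), (if m v = 1 then 1 else 2) ≤ m v := by
      intro v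
      have := H6 v
      split_ifs with h1
      · omega
      · omega
    have hsum : ∑ v : Fin (2 * k), (if m v = 1 then 1 else 2) ≤ ∑ v : Fin (2 * k), m v :=
      Finset.sum_le_sum (fun v _ => hpt v)
    have hsplit : ∑ v : Fin (2 * k), (if m v = 1 then 1 else 2)
        = (univ.filter (fun v : Fin (2 * k) => m v = 1)).card * 1
          + (univ.filter (fun v : Fin (2 * k) => ¬ m v = 1)).card * 2 := by
      rw [Finset.sum_ite, Finset.sum_const, Finset.sum_const]
      simp [mul_comm]
    have hpart := Finset.card_filter_add_card_filter_not
      (s := (univ : Finset (Fin (2 * k)))) (p := fun v : Fin (2 * k) => m v = 1)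
    rw [Finset.card_univ, hcardV] at hpart
    rw [← H7]
    omega
  -- b i ≤ c i
  have H10 : ∀ i, b i ≤ c i := by
    intro i
    simp only [hb, hc]
    apply Finset.card_le_card
    intro v hv
    simp only [mem_filter, mem_univ, true_and] at hv ⊢
    refine ⟨mem_center_of_two_le (hC2 i) hv, ?_⟩
    rw [← dg_pos_iff]
    omega
  -- Z ≤ 1
  have H11 : ∑ i, z i ≤ 1 := by
    have h1 : ∑ i, b i + ∑ i, z i ≤ ∑ i, (c i + z i) := by
      rw [Finset.sum_add_distrib]
      have := Finset.sum_le_sum (fun i (_ : i ∈ (univ : Finset (Fin (k+1)))) => H10 i)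
      omega
    omega
  -- every forest has an active center
  have H13 : ∀ i, 1 ≤ c i := by
    intro i
    by_contra h0
    push_neg at h0
    have hci : c i = 0 := by omega
    have he0 : e i = 0 := by
      simp only [he]
      rw [Finset.card_eq_zero, Finset.filter_eq_empty_iff]
      rintro v - ⟨hvC, u, hadj⟩
      have huC : u ∈ C i := by
        by_contra huC
        exact hvC ((hC1 i hadj).2 huC)
      have hpos : (univ.filter (fun w : Fin (2 * k) => w ∈ C i ∧ ∃ x, (F i).Adj w x)).card ≠ 0 := by
        rw [← Nat.pos_iff_ne_zero, Finset.card_pos]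
        exact ⟨u, by simp only [mem_filter, mem_univ, true_and]; exact ⟨huC, v, hadj.symm⟩⟩
      apply hpos
      simpa only [hc] using hci
    have hzi : z i ≤ 1 := le_trans (Finset.single_le_sum (f := z) (fun j _ => Nat.zero_le _) (mem_univ i)) H11
    have := H2 i
    omega
  -- no forest is a single star
  have H14 : ∀ i, c i ≠ 1 := by
    intro j hcj
    -- the unique active center y
    have hcard1 : (univ.filter (fun v : Fin (2*k) => v ∈ C j ∧ ∃ u, (F j).Adj v u)).card = 1 := by
      simpa only [hc] using hcj
    obtain ⟨y, hy⟩ := Finset.card_eq_one.mp hcard1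
    have hyy : y ∈ C j ∧ ∃ u, (F j).Adj y u := by
      have : y ∈ univ.filter (fun v : Fin (2*k) => v ∈ C j ∧ ∃ u, (F j).Adj v u) := by
        rw [hy]; exact Finset.mem_singleton_self y
      exact (mem_filter.1 this).2
    -- dg (F j) y = e j
    have hdeq : univ.filter (fun u : Fin (2*k) => (F j).Adj y u)
        = univ.filter (fun v : Fin (2*k) => v ∉ C j ∧ ∃ u, (F j).Adj v u) := by
      ext u
      simp only [mem_filter, mem_univ, true_and]
      constructor
      · intro hadj
        exact ⟨((hC1 j hadj).1 hyy.1), ⟨y, hadj.symm⟩⟩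
      · rintro ⟨huC, w, hadj⟩
        have hwC : w ∈ C j := by
          by_contra hwC
          exact huC ((hC1 j hadj).2 hwC)
        have hwy : w = y := by
          have : w ∈ univ.filter (fun v : Fin (2*k) => v ∈ C j ∧ ∃ u, (F j).Adj v u) := by
            simp only [mem_filter, mem_univ, true_and]
            exact ⟨hwC, u, hadj.symm⟩
          rw [hy, Finset.mem_singleton] at this
          exact this
        rw [← hwy]
        exact hadj.symm
    have hdy : dg (F j) y = e j := by
      rw [dg, hdeq]
    have hzj : z j ≤ 1 :=
      le_trans (Finset.single_le_sum (f := z) (fun l _ => Nat.zero_le _) (mem_univ j)) H11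
    have hH2j := H2 j
    -- sum of degrees of y over the other forests is at most 1
    have hadd : dg (F j) y + ∑ l ∈ univ.erase j, dg (F l) y = ∑ l, dg (F l) y :=
      Finset.add_sum_erase univ (fun l => dg (F l) y) (mem_univ j)
    have hs := H1 y
    have hrest1 : ∑ l ∈ univ.erase j, dg (F l) y ≤ 1 := by omega
    -- forests (other than j) where y has positive degree: at most 1
    have hT' : ((univ.erase j).filter (fun l => 1 ≤ dg (F l) y)).card ≤ 1 := by
      have h1 : ((univ.erase j).filter (fun l => 1 ≤ dg (F l) y)).card
          ≤ ∑ l ∈ (univ.erase j).filter (fun l => 1 ≤ dg (F l) y), dg (F l) y := by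
        calc ((univ.erase j).filter (fun l => 1 ≤ dg (F l) y)).card
            = ∑ _l ∈ (univ.erase j).filter (fun l => 1 ≤ dg (F l) y), 1 := by simp
          _ ≤ _ := Finset.sum_le_sum (fun l hl => (mem_filter.1 hl).2)
      have h2 : ∑ l ∈ (univ.erase j).filter (fun l => 1 ≤ dg (F l) y), dg (F l) y
          ≤ ∑ l ∈ univ.erase j, dg (F l) y :=
        Finset.sum_le_sum_of_subset (Finset.filter_subset _ _)
      omega
    -- forests (other than j) where y is isolated: at least k - 1
    have hpartT := Finset.card_filter_add_card_filter_not
      (s := univ.erase j) (p := fun l => 1 ≤ dg (F l) y)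
    have hcarde : (univ.erase j).card = k := by
      rw [Finset.card_erase_of_mem (mem_univ j), Finset.card_univ, Fintype.card_fin]
      omega
    have hTcard : k - 1 ≤ ((univ.erase j).filter (fun l => ¬ 1 ≤ dg (F l) y)).card := by
      omega
    -- each such forest has an isolated vertex
    have hz1 : ∀ l ∈ (univ.erase j).filter (fun l => ¬ 1 ≤ dg (F l) y), 1 ≤ z l := by
      intro l hl
      have hd0 : dg (F l) y = 0 := by
        have := (mem_filter.1 hl).2
        omega
      have hno : ¬ ∃ u, (F l).Adj y u := by
        rw [← dg_pos_iff]
        omega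
      simp only [hz]
      rw [Nat.one_le_iff_ne_zero, ← Nat.pos_iff_ne_zero, Finset.card_pos]
      exact ⟨y, by simp only [mem_filter, mem_univ, true_and]; exact hno⟩
    have hZbig : ((univ.erase j).filter (fun l => ¬ 1 ≤ dg (F l) y)).card ≤ ∑ l, z l := by
      calc ((univ.erase j).filter (fun l => ¬ 1 ≤ dg (F l) y)).card
          = ∑ _l ∈ (univ.erase j).filter (fun l => ¬ 1 ≤ dg (F l) y), 1 := by simp
        _ ≤ ∑ l ∈ (univ.erase j).filter (fun l => ¬ 1 ≤ dg (F l) y), z l :=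
            Finset.sum_le_sum hz1
        _ ≤ ∑ l, z l := Finset.sum_le_sum_of_subset (Finset.subset_univ _)
    omega
  -- conclusion
  have Hfin : ∀ i, 3 ≤ c i := by
    intro i
    have h1 := H13 i
    have h2 := H12 i
    have h3 := H14 i
    omega
  have hfin2 : 3 * (k + 1) ≤ ∑ i, c i := by
    calc 3 * (k+1) = ∑ _i : Fin (k+1), 3 := by simp [mul_comm]
      _ ≤ ∑ i, c i := Finset.sum_le_sum (fun i _ => Hfin i)
  have hle : ∑ i, c i ≤ ∑ i, (c i + z i) := Finset.sum_le_sum (fun i _ => Nat.le_add_right _ _)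
  omega
end

section
/- There exists a set of 6 points in general position in ℝ² whose complete geometric graph admits a decomposition into 4 plane star-forests such that every one of the 6 points is the center of at least one star of the decomposition. -/
/-- A family of points in the plane, indexed by `V`, is in general position if the points
are pairwise distinct and no three of them are collinear. -/
def GenPos {V : Type*} (pts : V → ℝ × ℝ) : Prop :=
  Function.Injective pts ∧
  ∀ i j l : V, i ≠ j → i ≠ l → j ≠ l →
    ¬ Collinear ℝ ({pts i, pts j, pts l} : Set (ℝ × ℝ))

/-- A geometric graph (graph `G` with vertices drawn at the points `pts` and edges drawn
as straight segments) is plane if any two distinct edges intersect at most in common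
endpoints. -/
def IsPlaneGraph {V : Type*} (pts : V → ℝ × ℝ) (G : SimpleGraph V) : Prop :=
  ∀ a b c d : V, G.Adj a b → G.Adj c d → s(a, b) ≠ s(c, d) →
    ∀ x : ℝ × ℝ, x ∈ segment ℝ (pts a) (pts b) → x ∈ segment ℝ (pts c) (pts d) →
      (x = pts a ∨ x = pts b) ∧ (x = pts c ∨ x = pts d)

/-- A decomposition of the complete geometric graph on the points `pts` into `m` plane
star-forests. -/
def IsPlaneStarForestDecomp {V : Type*} {m : ℕ} (pts : V → ℝ × ℝ)
    (F : Fin m → SimpleGraph V) : Prop :=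
  (∀ u v : V, u ≠ v → ∃! i : Fin m, (F i).Adj u v) ∧
  (∀ i, IsStarForest (F i)) ∧ (∀ i, IsPlaneGraph pts (F i))

/-- `v` is the center of one of the stars (connected components) of the star-forest `G`:
every edge of the component of `v` is incident to `v`. -/
def IsStarCenter {V : Type*} (G : SimpleGraph V) (v : V) : Prop :=
  ∀ a b : V, G.Adj a b → G.Reachable v a → a = v ∨ b = v

/-! ### Auxiliary definitions and lemmas for the construction -/

/-- The six points. -/
def pt : Fin 6 → ℝ × ℝ
  | 0 => (7,2)
  | 1 => (9,2)
  | 2 => (5,-1)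
  | 3 => (8,-9)
  | 4 => (3,7)
  | 5 => (-5,7)

/-- The edge lists of the four star-forests. -/
def EL : Fin 4 → List (Fin 6 × Fin 6)
  | 0 => [(0,1),(2,5),(3,4)]
  | 1 => [(0,2),(0,3),(1,4),(1,5)]
  | 2 => [(0,4),(1,3),(2,4),(3,5)]
  | 3 => [(0,5),(1,2),(2,3),(4,5)]

/-- The four star-forests. -/
def F : Fin 4 → SimpleGraph (Fin 6) := fun i =>
  SimpleGraph.fromRel (fun u v => (u,v) ∈ EL i)

instance (i : Fin 4) : DecidableRel (F i).Adj :=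
  fun _ _ => inferInstanceAs (Decidable (_ ∧ (_ ∨ _)))

lemma not_collinear_of_det {p q r : ℝ × ℝ}
    (h : (q.1-p.1)*(r.2-p.2)-(q.2-p.2)*(r.1-p.1) ≠ 0) :
    ¬ Collinear ℝ ({p, q, r} : Set (ℝ × ℝ)) := by
  intro hc
  rw [collinear_iff_of_mem (Set.mem_insert p _)] at hc
  obtain ⟨v, hv⟩ := hc
  obtain ⟨cq, hq⟩ := hv q (by simp)
  obtain ⟨cr, hr⟩ := hv r (by simp)
  apply h
  rw [hq, hr]
  simp [Prod.smul_fst, Prod.smul_snd, smul_eq_mul]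
  ring

/-- Two segments sharing the endpoint `p`, whose other endpoints are not collinear
with `p`, meet only at `p`. -/
lemma touch11 {p q r x : ℝ × ℝ}
    (h : (q.1-p.1)*(r.2-p.2)-(q.2-p.2)*(r.1-p.1) ≠ 0)
    (h1 : x ∈ segment ℝ p q) (h2 : x ∈ segment ℝ p r) : x = p := by
  obtain ⟨a, b, ha, hb, hab, hx⟩ := h1
  obtain ⟨c, d, hc, hd, hcd, hy⟩ := h2
  have e1 := congrArg Prod.fst hx
  have e2 := congrArg Prod.snd hx
  have e3 := congrArg Prod.fst hy
  have e4 := congrArg Prod.snd hy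
  simp only [Prod.fst_add, Prod.snd_add, Prod.smul_fst, Prod.smul_snd, smul_eq_mul]
    at e1 e2 e3 e4
  have k1 : b*(q.1-p.1) = d*(r.1-p.1) := by linear_combination e1 - e3 - p.1 * hab + p.1 * hcd
  have k2 : b*(q.2-p.2) = d*(r.2-p.2) := by linear_combination e2 - e4 - p.2 * hab + p.2 * hcd
  have hb0 : b = 0 := by
    have hh : b * ((q.1-p.1)*(r.2-p.2)-(q.2-p.2)*(r.1-p.1)) = 0 := by
      linear_combination (r.2-p.2)*k1 - (r.1-p.1)*k2
    exact (mul_eq_zero.mp hh).resolve_right h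
  have hd0 : d = 0 := by
    have hh : d * ((q.1-p.1)*(r.2-p.2)-(q.2-p.2)*(r.1-p.1)) = 0 := by
      linear_combination (q.2-p.2)*k1 - (q.1-p.1)*k2
    exact (mul_eq_zero.mp hh).resolve_right h
  have ha1 : a = 1 := by linarith
  apply Prod.ext
  · rw [← e1, hb0, ha1]; ring
  · rw [← e2, hb0, ha1]; ring

lemma touch12 {p q r x : ℝ × ℝ}
    (h : (q.1-p.1)*(r.2-p.2)-(q.2-p.2)*(r.1-p.1) ≠ 0)
    (h1 : x ∈ segment ℝ p q) (h2 : x ∈ segment ℝ r p) : x = p :=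
  touch11 h h1 (by rwa [segment_symm] at h2)

lemma touch21 {p q r x : ℝ × ℝ}
    (h : (q.1-p.1)*(r.2-p.2)-(q.2-p.2)*(r.1-p.1) ≠ 0)
    (h1 : x ∈ segment ℝ q p) (h2 : x ∈ segment ℝ p r) : x = p :=
  touch11 h (by rwa [segment_symm] at h1) h2

lemma touch22 {p q r x : ℝ × ℝ}
    (h : (q.1-p.1)*(r.2-p.2)-(q.2-p.2)*(r.1-p.1) ≠ 0)
    (h1 : x ∈ segment ℝ q p) (h2 : x ∈ segment ℝ r p) : x = p :=
  touch11 h (by rwa [segment_symm] at h1) (by rwa [segment_symm] at h2)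

/-- If `r` and `s` lie strictly on the same side of the line through `p` and `q`,
then the segments `[p,q]` and `[r,s]` are disjoint. -/
lemma noCross {p q r s x : ℝ × ℝ}
    (h : 0 < ((q.1-p.1)*(r.2-p.2)-(q.2-p.2)*(r.1-p.1)) *
         ((q.1-p.1)*(s.2-p.2)-(q.2-p.2)*(s.1-p.1)))
    (h1 : x ∈ segment ℝ p q) (h2 : x ∈ segment ℝ r s) : False := by
  obtain ⟨a, b, ha, hb, hab, hx⟩ := h1
  obtain ⟨c, d, hc, hd, hcd, hy⟩ := h2
  have e1 := congrArg Prod.fst hx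
  have e2 := congrArg Prod.snd hx
  have e3 := congrArg Prod.fst hy
  have e4 := congrArg Prod.snd hy
  simp only [Prod.fst_add, Prod.snd_add, Prod.smul_fst, Prod.smul_snd, smul_eq_mul]
    at e1 e2 e3 e4
  set Or := (q.1-p.1)*(r.2-p.2)-(q.2-p.2)*(r.1-p.1) with hOr
  set Os := (q.1-p.1)*(s.2-p.2)-(q.2-p.2)*(s.1-p.1) with hOs
  have key : c * Or + d * Os = 0 := by
    rw [hOr, hOs]
    linear_combination (q.1-p.1)*e4 - (q.2-p.2)*e3 - (q.1-p.1)*e2 + (q.2-p.2)*e1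
      + (p.2*(q.1-p.1) - p.1*(q.2-p.2))*hab - (p.2*(q.1-p.1) - p.1*(q.2-p.2))*hcd
  rcases mul_pos_iff.mp h with ⟨h5, h6⟩ | ⟨h5, h6⟩
  · rcases eq_or_lt_of_le hc with hc0 | hc0
    · have : d = 1 := by linarith
      nlinarith
    · nlinarith [mul_pos hc0 h5, mul_nonneg hd h6.le]
  · rcases eq_or_lt_of_le hc with hc0 | hc0
    · have : d = 1 := by linarith
      nlinarith
    · nlinarith [mul_pos_of_neg_of_neg h5 (by linarith : -c < 0),
        mul_nonneg hd (by linarith : (0:ℝ) ≤ -Os)]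

/-- If a set `S` containing `v` is closed under adjacency and every edge leaving `S`
is incident to `v`, then `v` is a star center. -/
lemma center_of {V : Type*} (G : SimpleGraph V) (v : V) (S : V → Prop) (hv : S v)
    (hcl : ∀ a b : V, S a → G.Adj a b → S b)
    (hstar : ∀ a b : V, S a → G.Adj a b → a = v ∨ b = v) : IsStarCenter G v := by
  have key : ∀ (u a : V), G.Walk u a → S u → S a := by
    intro u a w
    induction w with
    | nil => exact id
    | cons h _ ih => exact fun hu => ih (hcl _ _ hu h)
  intro a b hab hr
  exact hstar a b (key v a hr.some hv) hab

lemma plane0 : IsPlaneGraph pt (F 0) := by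
  intro a b c d hab hcd hne x hx1 hx2
  simp only [F, SimpleGraph.fromRel_adj, EL, List.mem_cons,
    List.not_mem_nil, or_false, Prod.mk.injEq] at hab hcd
  obtain ⟨-, hab⟩ := hab
  obtain ⟨-, hcd⟩ := hcd
  rcases hab with ((⟨rfl,rfl⟩|⟨rfl,rfl⟩|⟨rfl,rfl⟩)|⟨rfl,rfl⟩|⟨rfl,rfl⟩|⟨rfl,rfl⟩)
  · rcases hcd with ((⟨rfl,rfl⟩|⟨rfl,rfl⟩|⟨rfl,rfl⟩)|⟨rfl,rfl⟩|⟨rfl,rfl⟩|⟨rfl,rfl⟩)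
    · exact absurd rfl hne
    · exact (noCross (by norm_num [pt]) hx2 hx1).elim
    · exact (noCross (by norm_num [pt]) hx2 hx1).elim
    · exact absurd Sym2.eq_swap hne
    · exact (noCross (by norm_num [pt]) hx2 hx1).elim
    · exact (noCross (by norm_num [pt]) hx2 hx1).elim
  · rcases hcd with ((⟨rfl,rfl⟩|⟨rfl,rfl⟩|⟨rfl,rfl⟩)|⟨rfl,rfl⟩|⟨rfl,rfl⟩|⟨rfl,rfl⟩)
    · exact (noCross (by norm_num [pt]) hx1 hx2).elim
    · exact absurd rfl hne
    · exact (noCross (by norm_num [pt]) hx2 hx1).elim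
    · exact (noCross (by norm_num [pt]) hx1 hx2).elim
    · exact absurd Sym2.eq_swap hne
    · exact (noCross (by norm_num [pt]) hx2 hx1).elim
  · rcases hcd with ((⟨rfl,rfl⟩|⟨rfl,rfl⟩|⟨rfl,rfl⟩)|⟨rfl,rfl⟩|⟨rfl,rfl⟩|⟨rfl,rfl⟩)
    · exact (noCross (by norm_num [pt]) hx1 hx2).elim
    · exact (noCross (by norm_num [pt]) hx1 hx2).elim
    · exact absurd rfl hne
    · exact (noCross (by norm_num [pt]) hx1 hx2).elim
    · exact (noCross (by norm_num [pt]) hx1 hx2).elim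
    · exact absurd Sym2.eq_swap hne
  · rcases hcd with ((⟨rfl,rfl⟩|⟨rfl,rfl⟩|⟨rfl,rfl⟩)|⟨rfl,rfl⟩|⟨rfl,rfl⟩|⟨rfl,rfl⟩)
    · exact absurd Sym2.eq_swap hne
    · exact (noCross (by norm_num [pt]) hx2 hx1).elim
    · exact (noCross (by norm_num [pt]) hx2 hx1).elim
    · exact absurd rfl hne
    · exact (noCross (by norm_num [pt]) hx2 hx1).elim
    · exact (noCross (by norm_num [pt]) hx2 hx1).elim
  · rcases hcd with ((⟨rfl,rfl⟩|⟨rfl,rfl⟩|⟨rfl,rfl⟩)|⟨rfl,rfl⟩|⟨rfl,rfl⟩|⟨rfl,rfl⟩)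
    · exact (noCross (by norm_num [pt]) hx1 hx2).elim
    · exact absurd Sym2.eq_swap hne
    · exact (noCross (by norm_num [pt]) hx2 hx1).elim
    · exact (noCross (by norm_num [pt]) hx1 hx2).elim
    · exact absurd rfl hne
    · exact (noCross (by norm_num [pt]) hx2 hx1).elim
  · rcases hcd with ((⟨rfl,rfl⟩|⟨rfl,rfl⟩|⟨rfl,rfl⟩)|⟨rfl,rfl⟩|⟨rfl,rfl⟩|⟨rfl,rfl⟩)
    · exact (noCross (by norm_num [pt]) hx1 hx2).elim
    · exact (noCross (by norm_num [pt]) hx1 hx2).elim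
    · exact absurd Sym2.eq_swap hne
    · exact (noCross (by norm_num [pt]) hx1 hx2).elim
    · exact (noCross (by norm_num [pt]) hx1 hx2).elim
    · exact absurd rfl hne
lemma plane1 : IsPlaneGraph pt (F 1) := by
  intro a b c d hab hcd hne x hx1 hx2
  simp only [F, SimpleGraph.fromRel_adj, EL, List.mem_cons,
    List.not_mem_nil, or_false, Prod.mk.injEq] at hab hcd
  obtain ⟨-, hab⟩ := hab
  obtain ⟨-, hcd⟩ := hcd
  rcases hab with ((⟨rfl,rfl⟩|⟨rfl,rfl⟩|⟨rfl,rfl⟩|⟨rfl,rfl⟩)|⟨rfl,rfl⟩|⟨rfl,rfl⟩|⟨rfl,rfl⟩|⟨rfl,rfl⟩)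
  · rcases hcd with ((⟨rfl,rfl⟩|⟨rfl,rfl⟩|⟨rfl,rfl⟩|⟨rfl,rfl⟩)|⟨rfl,rfl⟩|⟨rfl,rfl⟩|⟨rfl,rfl⟩|⟨rfl,rfl⟩)
    · exact absurd rfl hne
    · have h := touch11 (p := pt 0) (by norm_num [pt]) hx1 hx2; exact ⟨Or.inl h, Or.inl h⟩
    · exact (noCross (by norm_num [pt]) hx2 hx1).elim
    · exact (noCross (by norm_num [pt]) hx2 hx1).elim
    · exact absurd Sym2.eq_swap hne
    · have h := touch12 (p := pt 0) (by norm_num [pt]) hx1 hx2; exact ⟨Or.inl h, Or.inr h⟩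
    · exact (noCross (by norm_num [pt]) hx2 hx1).elim
    · exact (noCross (by norm_num [pt]) hx2 hx1).elim
  · rcases hcd with ((⟨rfl,rfl⟩|⟨rfl,rfl⟩|⟨rfl,rfl⟩|⟨rfl,rfl⟩)|⟨rfl,rfl⟩|⟨rfl,rfl⟩|⟨rfl,rfl⟩|⟨rfl,rfl⟩)
    · have h := touch11 (p := pt 0) (by norm_num [pt]) hx1 hx2; exact ⟨Or.inl h, Or.inl h⟩
    · exact absurd rfl hne
    · exact (noCross (by norm_num [pt]) hx2 hx1).elim
    · exact (noCross (by norm_num [pt]) hx2 hx1).elim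
    · have h := touch12 (p := pt 0) (by norm_num [pt]) hx1 hx2; exact ⟨Or.inl h, Or.inr h⟩
    · exact absurd Sym2.eq_swap hne
    · exact (noCross (by norm_num [pt]) hx2 hx1).elim
    · exact (noCross (by norm_num [pt]) hx2 hx1).elim
  · rcases hcd with ((⟨rfl,rfl⟩|⟨rfl,rfl⟩|⟨rfl,rfl⟩|⟨rfl,rfl⟩)|⟨rfl,rfl⟩|⟨rfl,rfl⟩|⟨rfl,rfl⟩|⟨rfl,rfl⟩)
    · exact (noCross (by norm_num [pt]) hx1 hx2).elim
    · exact (noCross (by norm_num [pt]) hx1 hx2).elim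
    · exact absurd rfl hne
    · have h := touch11 (p := pt 1) (by norm_num [pt]) hx1 hx2; exact ⟨Or.inl h, Or.inl h⟩
    · exact (noCross (by norm_num [pt]) hx1 hx2).elim
    · exact (noCross (by norm_num [pt]) hx1 hx2).elim
    · exact absurd Sym2.eq_swap hne
    · have h := touch12 (p := pt 1) (by norm_num [pt]) hx1 hx2; exact ⟨Or.inl h, Or.inr h⟩
  · rcases hcd with ((⟨rfl,rfl⟩|⟨rfl,rfl⟩|⟨rfl,rfl⟩|⟨rfl,rfl⟩)|⟨rfl,rfl⟩|⟨rfl,rfl⟩|⟨rfl,rfl⟩|⟨rfl,rfl⟩)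
    · exact (noCross (by norm_num [pt]) hx1 hx2).elim
    · exact (noCross (by norm_num [pt]) hx1 hx2).elim
    · have h := touch11 (p := pt 1) (by norm_num [pt]) hx1 hx2; exact ⟨Or.inl h, Or.inl h⟩
    · exact absurd rfl hne
    · exact (noCross (by norm_num [pt]) hx1 hx2).elim
    · exact (noCross (by norm_num [pt]) hx1 hx2).elim
    · have h := touch12 (p := pt 1) (by norm_num [pt]) hx1 hx2; exact ⟨Or.inl h, Or.inr h⟩
    · exact absurd Sym2.eq_swap hne
  · rcases hcd with ((⟨rfl,rfl⟩|⟨rfl,rfl⟩|⟨rfl,rfl⟩|⟨rfl,rfl⟩)|⟨rfl,rfl⟩|⟨rfl,rfl⟩|⟨rfl,rfl⟩|⟨rfl,rfl⟩)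
    · exact absurd Sym2.eq_swap hne
    · have h := touch21 (p := pt 0) (by norm_num [pt]) hx1 hx2; exact ⟨Or.inr h, Or.inl h⟩
    · exact (noCross (by norm_num [pt]) hx2 hx1).elim
    · exact (noCross (by norm_num [pt]) hx2 hx1).elim
    · exact absurd rfl hne
    · have h := touch22 (p := pt 0) (by norm_num [pt]) hx1 hx2; exact ⟨Or.inr h, Or.inr h⟩
    · exact (noCross (by norm_num [pt]) hx2 hx1).elim
    · exact (noCross (by norm_num [pt]) hx2 hx1).elim
  · rcases hcd with ((⟨rfl,rfl⟩|⟨rfl,rfl⟩|⟨rfl,rfl⟩|⟨rfl,rfl⟩)|⟨rfl,rfl⟩|⟨rfl,rfl⟩|⟨rfl,rfl⟩|⟨rfl,rfl⟩)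
    · have h := touch21 (p := pt 0) (by norm_num [pt]) hx1 hx2; exact ⟨Or.inr h, Or.inl h⟩
    · exact absurd Sym2.eq_swap hne
    · exact (noCross (by norm_num [pt]) hx2 hx1).elim
    · exact (noCross (by norm_num [pt]) hx2 hx1).elim
    · have h := touch22 (p := pt 0) (by norm_num [pt]) hx1 hx2; exact ⟨Or.inr h, Or.inr h⟩
    · exact absurd rfl hne
    · exact (noCross (by norm_num [pt]) hx2 hx1).elim
    · exact (noCross (by norm_num [pt]) hx2 hx1).elim
  · rcases hcd with ((⟨rfl,rfl⟩|⟨rfl,rfl⟩|⟨rfl,rfl⟩|⟨rfl,rfl⟩)|⟨rfl,rfl⟩|⟨rfl,rfl⟩|⟨rfl,rfl⟩|⟨rfl,rfl⟩)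
    · exact (noCross (by norm_num [pt]) hx1 hx2).elim
    · exact (noCross (by norm_num [pt]) hx1 hx2).elim
    · exact absurd Sym2.eq_swap hne
    · have h := touch21 (p := pt 1) (by norm_num [pt]) hx1 hx2; exact ⟨Or.inr h, Or.inl h⟩
    · exact (noCross (by norm_num [pt]) hx1 hx2).elim
    · exact (noCross (by norm_num [pt]) hx1 hx2).elim
    · exact absurd rfl hne
    · have h := touch22 (p := pt 1) (by norm_num [pt]) hx1 hx2; exact ⟨Or.inr h, Or.inr h⟩
  · rcases hcd with ((⟨rfl,rfl⟩|⟨rfl,rfl⟩|⟨rfl,rfl⟩|⟨rfl,rfl⟩)|⟨rfl,rfl⟩|⟨rfl,rfl⟩|⟨rfl,rfl⟩|⟨rfl,rfl⟩)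
    · exact (noCross (by norm_num [pt]) hx1 hx2).elim
    · exact (noCross (by norm_num [pt]) hx1 hx2).elim
    · have h := touch21 (p := pt 1) (by norm_num [pt]) hx1 hx2; exact ⟨Or.inr h, Or.inl h⟩
    · exact absurd Sym2.eq_swap hne
    · exact (noCross (by norm_num [pt]) hx1 hx2).elim
    · exact (noCross (by norm_num [pt]) hx1 hx2).elim
    · have h := touch22 (p := pt 1) (by norm_num [pt]) hx1 hx2; exact ⟨Or.inr h, Or.inr h⟩
    · exact absurd rfl hne
lemma plane2 : IsPlaneGraph pt (F 2) := by
  intro a b c d hab hcd hne x hx1 hx2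
  simp only [F, SimpleGraph.fromRel_adj, EL, List.mem_cons,
    List.not_mem_nil, or_false, Prod.mk.injEq] at hab hcd
  obtain ⟨-, hab⟩ := hab
  obtain ⟨-, hcd⟩ := hcd
  rcases hab with ((⟨rfl,rfl⟩|⟨rfl,rfl⟩|⟨rfl,rfl⟩|⟨rfl,rfl⟩)|⟨rfl,rfl⟩|⟨rfl,rfl⟩|⟨rfl,rfl⟩|⟨rfl,rfl⟩)
  · rcases hcd with ((⟨rfl,rfl⟩|⟨rfl,rfl⟩|⟨rfl,rfl⟩|⟨rfl,rfl⟩)|⟨rfl,rfl⟩|⟨rfl,rfl⟩|⟨rfl,rfl⟩|⟨rfl,rfl⟩)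
    · exact absurd rfl hne
    · exact (noCross (by norm_num [pt]) hx2 hx1).elim
    · have h := touch22 (p := pt 4) (by norm_num [pt]) hx1 hx2; exact ⟨Or.inr h, Or.inr h⟩
    · exact (noCross (by norm_num [pt]) hx1 hx2).elim
    · exact absurd Sym2.eq_swap hne
    · exact (noCross (by norm_num [pt]) hx2 hx1).elim
    · have h := touch21 (p := pt 4) (by norm_num [pt]) hx1 hx2; exact ⟨Or.inr h, Or.inl h⟩
    · exact (noCross (by norm_num [pt]) hx1 hx2).elim
  · rcases hcd with ((⟨rfl,rfl⟩|⟨rfl,rfl⟩|⟨rfl,rfl⟩|⟨rfl,rfl⟩)|⟨rfl,rfl⟩|⟨rfl,rfl⟩|⟨rfl,rfl⟩|⟨rfl,rfl⟩)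
    · exact (noCross (by norm_num [pt]) hx1 hx2).elim
    · exact absurd rfl hne
    · exact (noCross (by norm_num [pt]) hx1 hx2).elim
    · have h := touch21 (p := pt 3) (by norm_num [pt]) hx1 hx2; exact ⟨Or.inr h, Or.inl h⟩
    · exact (noCross (by norm_num [pt]) hx1 hx2).elim
    · exact absurd Sym2.eq_swap hne
    · exact (noCross (by norm_num [pt]) hx1 hx2).elim
    · have h := touch22 (p := pt 3) (by norm_num [pt]) hx1 hx2; exact ⟨Or.inr h, Or.inr h⟩
  · rcases hcd with ((⟨rfl,rfl⟩|⟨rfl,rfl⟩|⟨rfl,rfl⟩|⟨rfl,rfl⟩)|⟨rfl,rfl⟩|⟨rfl,rfl⟩|⟨rfl,rfl⟩|⟨rfl,rfl⟩)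
    · have h := touch22 (p := pt 4) (by norm_num [pt]) hx1 hx2; exact ⟨Or.inr h, Or.inr h⟩
    · exact (noCross (by norm_num [pt]) hx1 hx2).elim
    · exact absurd rfl hne
    · exact (noCross (by norm_num [pt]) hx2 hx1).elim
    · have h := touch21 (p := pt 4) (by norm_num [pt]) hx1 hx2; exact ⟨Or.inr h, Or.inl h⟩
    · exact (noCross (by norm_num [pt]) hx1 hx2).elim
    · exact absurd Sym2.eq_swap hne
    · exact (noCross (by norm_num [pt]) hx2 hx1).elim
  · rcases hcd with ((⟨rfl,rfl⟩|⟨rfl,rfl⟩|⟨rfl,rfl⟩|⟨rfl,rfl⟩)|⟨rfl,rfl⟩|⟨rfl,rfl⟩|⟨rfl,rfl⟩|⟨rfl,rfl⟩)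
    · exact (noCross (by norm_num [pt]) hx1 hx2).elim
    · have h := touch12 (p := pt 3) (by norm_num [pt]) hx1 hx2; exact ⟨Or.inl h, Or.inr h⟩
    · exact (noCross (by norm_num [pt]) hx1 hx2).elim
    · exact absurd rfl hne
    · exact (noCross (by norm_num [pt]) hx1 hx2).elim
    · have h := touch11 (p := pt 3) (by norm_num [pt]) hx1 hx2; exact ⟨Or.inl h, Or.inl h⟩
    · exact (noCross (by norm_num [pt]) hx1 hx2).elim
    · exact absurd Sym2.eq_swap hne
  · rcases hcd with ((⟨rfl,rfl⟩|⟨rfl,rfl⟩|⟨rfl,rfl⟩|⟨rfl,rfl⟩)|⟨rfl,rfl⟩|⟨rfl,rfl⟩|⟨rfl,rfl⟩|⟨rfl,rfl⟩)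
    · exact absurd Sym2.eq_swap hne
    · exact (noCross (by norm_num [pt]) hx2 hx1).elim
    · have h := touch12 (p := pt 4) (by norm_num [pt]) hx1 hx2; exact ⟨Or.inl h, Or.inr h⟩
    · exact (noCross (by norm_num [pt]) hx1 hx2).elim
    · exact absurd rfl hne
    · exact (noCross (by norm_num [pt]) hx2 hx1).elim
    · have h := touch11 (p := pt 4) (by norm_num [pt]) hx1 hx2; exact ⟨Or.inl h, Or.inl h⟩
    · exact (noCross (by norm_num [pt]) hx1 hx2).elim
  · rcases hcd with ((⟨rfl,rfl⟩|⟨rfl,rfl⟩|⟨rfl,rfl⟩|⟨rfl,rfl⟩)|⟨rfl,rfl⟩|⟨rfl,rfl⟩|⟨rfl,rfl⟩|⟨rfl,rfl⟩)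
    · exact (noCross (by norm_num [pt]) hx1 hx2).elim
    · exact absurd Sym2.eq_swap hne
    · exact (noCross (by norm_num [pt]) hx1 hx2).elim
    · have h := touch11 (p := pt 3) (by norm_num [pt]) hx1 hx2; exact ⟨Or.inl h, Or.inl h⟩
    · exact (noCross (by norm_num [pt]) hx1 hx2).elim
    · exact absurd rfl hne
    · exact (noCross (by norm_num [pt]) hx1 hx2).elim
    · have h := touch12 (p := pt 3) (by norm_num [pt]) hx1 hx2; exact ⟨Or.inl h, Or.inr h⟩
  · rcases hcd with ((⟨rfl,rfl⟩|⟨rfl,rfl⟩|⟨rfl,rfl⟩|⟨rfl,rfl⟩)|⟨rfl,rfl⟩|⟨rfl,rfl⟩|⟨rfl,rfl⟩|⟨rfl,rfl⟩)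
    · have h := touch12 (p := pt 4) (by norm_num [pt]) hx1 hx2; exact ⟨Or.inl h, Or.inr h⟩
    · exact (noCross (by norm_num [pt]) hx1 hx2).elim
    · exact absurd Sym2.eq_swap hne
    · exact (noCross (by norm_num [pt]) hx2 hx1).elim
    · have h := touch11 (p := pt 4) (by norm_num [pt]) hx1 hx2; exact ⟨Or.inl h, Or.inl h⟩
    · exact (noCross (by norm_num [pt]) hx1 hx2).elim
    · exact absurd rfl hne
    · exact (noCross (by norm_num [pt]) hx2 hx1).elim
  · rcases hcd with ((⟨rfl,rfl⟩|⟨rfl,rfl⟩|⟨rfl,rfl⟩|⟨rfl,rfl⟩)|⟨rfl,rfl⟩|⟨rfl,rfl⟩|⟨rfl,rfl⟩|⟨rfl,rfl⟩)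
    · exact (noCross (by norm_num [pt]) hx1 hx2).elim
    · have h := touch22 (p := pt 3) (by norm_num [pt]) hx1 hx2; exact ⟨Or.inr h, Or.inr h⟩
    · exact (noCross (by norm_num [pt]) hx1 hx2).elim
    · exact absurd Sym2.eq_swap hne
    · exact (noCross (by norm_num [pt]) hx1 hx2).elim
    · have h := touch21 (p := pt 3) (by norm_num [pt]) hx1 hx2; exact ⟨Or.inr h, Or.inl h⟩
    · exact (noCross (by norm_num [pt]) hx1 hx2).elim
    · exact absurd rfl hne
lemma plane3 : IsPlaneGraph pt (F 3) := by
  intro a b c d hab hcd hne x hx1 hx2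
  simp only [F, SimpleGraph.fromRel_adj, EL, List.mem_cons,
    List.not_mem_nil, or_false, Prod.mk.injEq] at hab hcd
  obtain ⟨-, hab⟩ := hab
  obtain ⟨-, hcd⟩ := hcd
  rcases hab with ((⟨rfl,rfl⟩|⟨rfl,rfl⟩|⟨rfl,rfl⟩|⟨rfl,rfl⟩)|⟨rfl,rfl⟩|⟨rfl,rfl⟩|⟨rfl,rfl⟩|⟨rfl,rfl⟩)
  · rcases hcd with ((⟨rfl,rfl⟩|⟨rfl,rfl⟩|⟨rfl,rfl⟩|⟨rfl,rfl⟩)|⟨rfl,rfl⟩|⟨rfl,rfl⟩|⟨rfl,rfl⟩|⟨rfl,rfl⟩)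
    · exact absurd rfl hne
    · exact (noCross (by norm_num [pt]) hx2 hx1).elim
    · exact (noCross (by norm_num [pt]) hx1 hx2).elim
    · have h := touch22 (p := pt 5) (by norm_num [pt]) hx1 hx2; exact ⟨Or.inr h, Or.inr h⟩
    · exact absurd Sym2.eq_swap hne
    · exact (noCross (by norm_num [pt]) hx2 hx1).elim
    · exact (noCross (by norm_num [pt]) hx1 hx2).elim
    · have h := touch21 (p := pt 5) (by norm_num [pt]) hx1 hx2; exact ⟨Or.inr h, Or.inl h⟩
  · rcases hcd with ((⟨rfl,rfl⟩|⟨rfl,rfl⟩|⟨rfl,rfl⟩|⟨rfl,rfl⟩)|⟨rfl,rfl⟩|⟨rfl,rfl⟩|⟨rfl,rfl⟩|⟨rfl,rfl⟩)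
    · exact (noCross (by norm_num [pt]) hx1 hx2).elim
    · exact absurd rfl hne
    · have h := touch21 (p := pt 2) (by norm_num [pt]) hx1 hx2; exact ⟨Or.inr h, Or.inl h⟩
    · exact (noCross (by norm_num [pt]) hx1 hx2).elim
    · exact (noCross (by norm_num [pt]) hx1 hx2).elim
    · exact absurd Sym2.eq_swap hne
    · have h := touch22 (p := pt 2) (by norm_num [pt]) hx1 hx2; exact ⟨Or.inr h, Or.inr h⟩
    · exact (noCross (by norm_num [pt]) hx1 hx2).elim
  · rcases hcd with ((⟨rfl,rfl⟩|⟨rfl,rfl⟩|⟨rfl,rfl⟩|⟨rfl,rfl⟩)|⟨rfl,rfl⟩|⟨rfl,rfl⟩|⟨rfl,rfl⟩|⟨rfl,rfl⟩)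
    · exact (noCross (by norm_num [pt]) hx2 hx1).elim
    · have h := touch12 (p := pt 2) (by norm_num [pt]) hx1 hx2; exact ⟨Or.inl h, Or.inr h⟩
    · exact absurd rfl hne
    · exact (noCross (by norm_num [pt]) hx2 hx1).elim
    · exact (noCross (by norm_num [pt]) hx2 hx1).elim
    · have h := touch11 (p := pt 2) (by norm_num [pt]) hx1 hx2; exact ⟨Or.inl h, Or.inl h⟩
    · exact absurd Sym2.eq_swap hne
    · exact (noCross (by norm_num [pt]) hx2 hx1).elim
  · rcases hcd with ((⟨rfl,rfl⟩|⟨rfl,rfl⟩|⟨rfl,rfl⟩|⟨rfl,rfl⟩)|⟨rfl,rfl⟩|⟨rfl,rfl⟩|⟨rfl,rfl⟩|⟨rfl,rfl⟩)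
    · have h := touch22 (p := pt 5) (by norm_num [pt]) hx1 hx2; exact ⟨Or.inr h, Or.inr h⟩
    · exact (noCross (by norm_num [pt]) hx1 hx2).elim
    · exact (noCross (by norm_num [pt]) hx1 hx2).elim
    · exact absurd rfl hne
    · have h := touch21 (p := pt 5) (by norm_num [pt]) hx1 hx2; exact ⟨Or.inr h, Or.inl h⟩
    · exact (noCross (by norm_num [pt]) hx1 hx2).elim
    · exact (noCross (by norm_num [pt]) hx1 hx2).elim
    · exact absurd Sym2.eq_swap hne
  · rcases hcd with ((⟨rfl,rfl⟩|⟨rfl,rfl⟩|⟨rfl,rfl⟩|⟨rfl,rfl⟩)|⟨rfl,rfl⟩|⟨rfl,rfl⟩|⟨rfl,rfl⟩|⟨rfl,rfl⟩)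
    · exact absurd Sym2.eq_swap hne
    · exact (noCross (by norm_num [pt]) hx2 hx1).elim
    · exact (noCross (by norm_num [pt]) hx1 hx2).elim
    · have h := touch12 (p := pt 5) (by norm_num [pt]) hx1 hx2; exact ⟨Or.inl h, Or.inr h⟩
    · exact absurd rfl hne
    · exact (noCross (by norm_num [pt]) hx2 hx1).elim
    · exact (noCross (by norm_num [pt]) hx1 hx2).elim
    · have h := touch11 (p := pt 5) (by norm_num [pt]) hx1 hx2; exact ⟨Or.inl h, Or.inl h⟩
  · rcases hcd with ((⟨rfl,rfl⟩|⟨rfl,rfl⟩|⟨rfl,rfl⟩|⟨rfl,rfl⟩)|⟨rfl,rfl⟩|⟨rfl,rfl⟩|⟨rfl,rfl⟩|⟨rfl,rfl⟩)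
    · exact (noCross (by norm_num [pt]) hx1 hx2).elim
    · exact absurd Sym2.eq_swap hne
    · have h := touch11 (p := pt 2) (by norm_num [pt]) hx1 hx2; exact ⟨Or.inl h, Or.inl h⟩
    · exact (noCross (by norm_num [pt]) hx1 hx2).elim
    · exact (noCross (by norm_num [pt]) hx1 hx2).elim
    · exact absurd rfl hne
    · have h := touch12 (p := pt 2) (by norm_num [pt]) hx1 hx2; exact ⟨Or.inl h, Or.inr h⟩
    · exact (noCross (by norm_num [pt]) hx1 hx2).elim
  · rcases hcd with ((⟨rfl,rfl⟩|⟨rfl,rfl⟩|⟨rfl,rfl⟩|⟨rfl,rfl⟩)|⟨rfl,rfl⟩|⟨rfl,rfl⟩|⟨rfl,rfl⟩|⟨rfl,rfl⟩)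
    · exact (noCross (by norm_num [pt]) hx2 hx1).elim
    · have h := touch22 (p := pt 2) (by norm_num [pt]) hx1 hx2; exact ⟨Or.inr h, Or.inr h⟩
    · exact absurd Sym2.eq_swap hne
    · exact (noCross (by norm_num [pt]) hx2 hx1).elim
    · exact (noCross (by norm_num [pt]) hx2 hx1).elim
    · have h := touch21 (p := pt 2) (by norm_num [pt]) hx1 hx2; exact ⟨Or.inr h, Or.inl h⟩
    · exact absurd rfl hne
    · exact (noCross (by norm_num [pt]) hx2 hx1).elim
  · rcases hcd with ((⟨rfl,rfl⟩|⟨rfl,rfl⟩|⟨rfl,rfl⟩|⟨rfl,rfl⟩)|⟨rfl,rfl⟩|⟨rfl,rfl⟩|⟨rfl,rfl⟩|⟨rfl,rfl⟩)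
    · have h := touch12 (p := pt 5) (by norm_num [pt]) hx1 hx2; exact ⟨Or.inl h, Or.inr h⟩
    · exact (noCross (by norm_num [pt]) hx1 hx2).elim
    · exact (noCross (by norm_num [pt]) hx1 hx2).elim
    · exact absurd Sym2.eq_swap hne
    · have h := touch11 (p := pt 5) (by norm_num [pt]) hx1 hx2; exact ⟨Or.inl h, Or.inl h⟩
    · exact (noCross (by norm_num [pt]) hx1 hx2).elim
    · exact (noCross (by norm_num [pt]) hx1 hx2).elim
    · exact absurd rfl hne


/-- There exist `6` points in general position whose complete geometric graph decomposes
into `4` plane star-forests such that every point is the center of at least one star. -/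
theorem six_points_four_star_forests :
    ∃ pts : Fin 6 → ℝ × ℝ, GenPos pts ∧
      ∃ F : Fin 4 → SimpleGraph (Fin 6), IsPlaneStarForestDecomp pts F ∧
        ∀ v : Fin 6, ∃ i : Fin 4, IsStarCenter (F i) v := by
  refine ⟨pt, ⟨?_, ?_⟩, F, ⟨?_, ?_, ?_⟩, ?_⟩
  · -- injectivity
    intro i j hij
    fin_cases i <;> fin_cases j <;>
      first | rfl | (exfalso; norm_num [pt, Prod.ext_iff] at hij)
  · -- no three collinear
    intro i j l hij hil hjl
    fin_cases i <;> fin_cases j <;> fin_cases l <;>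
      first
        | exact absurd rfl hij
        | exact absurd rfl hil
        | exact absurd rfl hjl
        | exact not_collinear_of_det (by norm_num [pt])
  · -- decomposition
    simp only [ExistsUnique]
    decide
  · -- star forests
    intro i
    fin_cases i
    · exact ⟨{x | x ∈ ([0,2,3] : List (Fin 6))}, by decide, by decide⟩
    · exact ⟨{x | x ∈ ([0,1] : List (Fin 6))}, by decide, by decide⟩
    · exact ⟨{x | x ∈ ([3,4] : List (Fin 6))}, by decide, by decide⟩
    · exact ⟨{x | x ∈ ([2,5] : List (Fin 6))}, by decide, by decide⟩
  · -- plane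
    intro i
    fin_cases i
    · exact plane0
    · exact plane1
    · exact plane2
    · exact plane3
  · -- every vertex is a star center (in the perfect matching F 0)
    intro v
    refine ⟨0, ?_⟩
    fin_cases v
    · exact center_of _ _ (fun x => x ∈ ([0,1] : List (Fin 6))) (by decide) (by decide) (by decide)
    · exact center_of _ _ (fun x => x ∈ ([0,1] : List (Fin 6))) (by decide) (by decide) (by decide)
    · exact center_of _ _ (fun x => x ∈ ([2,5] : List (Fin 6))) (by decide) (by decide) (by decide)
    · exact center_of _ _ (fun x => x ∈ ([3,4] : List (Fin 6))) (by decide) (by decide) (by decide)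
    · exact center_of _ _ (fun x => x ∈ ([3,4] : List (Fin 6))) (by decide) (by decide) (by decide)
    · exact center_of _ _ (fun x => x ∈ ([2,5] : List (Fin 6))) (by decide) (by decide) (by decide)
end

section
/- For every integer k ≥ 1 there exists an SF-extendable arrangement of k pairwise disjoint line segments in the plane; that is, there exist 2k points in general position in ℝ² and a perfect matching of them by k pairwise disjoint segments such that the complete geometric graph on these 2k points admits a decomposition into k+1 plane star-forests, one of which is that perfect matching. -/
/-- The `2 * k` endpoints of an arrangement of `k` segments, the `i`-th segment having
endpoints `A i` and `B i`. -/
def segPts {k : ℕ} (A B : Fin k → ℝ × ℝ) : Fin k × Bool → ℝ × ℝ :=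
  fun p => if p.2 then B p.1 else A p.1

/-- The perfect matching formed by the `k` segments, pairing the two endpoints of each
segment. -/
def matchingGraph (k : ℕ) : SimpleGraph (Fin k × Bool) where
  Adj u v := u.1 = v.1 ∧ u.2 ≠ v.2
  symm := ⟨fun u v h => ⟨h.1.symm, h.2.symm⟩⟩
  loopless := ⟨fun u h => h.2 rfl⟩

/-- An arrangement of `k` segments (with endpoints `A i`, `B i`) is SF-extendable if the
complete geometric graph on its `2 * k` endpoints admits a decomposition into `k + 1`
plane star-forests, one of which is the perfect matching formed by the `k` segments. -/
def SFExtendable {k : ℕ} (A B : Fin k → ℝ × ℝ) : Prop :=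
  ∃ F : Fin (k + 1) → SimpleGraph (Fin k × Bool),
    IsPlaneStarForestDecomp (segPts A B) F ∧ ∃ i₀ : Fin (k + 1), F i₀ = matchingGraph k

namespace SFAux


/-- cross product test for three points -/
def cross (p q r : ℝ × ℝ) : ℝ :=
  (q.1 - p.1) * (r.2 - p.2) - (q.2 - p.2) * (r.1 - p.1)

lemma cross_swap₁ (p q r : ℝ × ℝ) : cross q p r = - cross p q r := by
  simp only [cross]; ring

lemma cross_swap₂ (p q r : ℝ × ℝ) : cross p r q = - cross p q r := by
  simp only [cross]; ring

lemma not_collinear_of_cross {p q r : ℝ × ℝ} (h : cross p q r ≠ 0) :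
    ¬ Collinear ℝ ({p, q, r} : Set (ℝ × ℝ)) := by
  intro hc
  obtain ⟨v, hv⟩ := (collinear_iff_of_mem (show p ∈ ({p,q,r} : Set (ℝ×ℝ)) by simp)).1 hc
  obtain ⟨rq, hq⟩ := hv q (by simp)
  obtain ⟨rr, hr⟩ := hv r (by simp)
  apply h
  have hq1 : q.1 = rq * v.1 + p.1 := by rw [hq]; rfl
  have hq2 : q.2 = rq * v.2 + p.2 := by rw [hq]; rfl
  have hr1 : r.1 = rr * v.1 + p.1 := by rw [hr]; rfl
  have hr2 : r.2 = rr * v.2 + p.2 := by rw [hr]; rfl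
  simp only [cross, hq1, hq2, hr1, hr2]; ring

/-- value of a linear functional on a segment, equality version -/
lemma seg_lin_eq {c₁ c₂ e : ℝ} {p q x : ℝ × ℝ} (hx : x ∈ segment ℝ p q)
    (hp : c₁ * p.1 + c₂ * p.2 = e) (hq : c₁ * q.1 + c₂ * q.2 = e) :
    c₁ * x.1 + c₂ * x.2 = e := by
  obtain ⟨a, b, ha, hb, hab, hx⟩ := hx
  have h1 : x.1 = a * p.1 + b * q.1 := by rw [← hx]; rfl
  have h2 : x.2 = a * p.2 + b * q.2 := by rw [← hx]; rfl
  have : c₁ * x.1 + c₂ * x.2 = a * (c₁ * p.1 + c₂ * p.2) + b * (c₁ * q.1 + c₂ * q.2) := by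
    rw [h1, h2]; ring
  rw [this, hp, hq]
  have : a * e + b * e = e := by rw [← add_mul, hab, one_mul]
  linarith

lemma seg_lin_lt {c₁ c₂ e : ℝ} {p q x : ℝ × ℝ} (hx : x ∈ segment ℝ p q)
    (hp : c₁ * p.1 + c₂ * p.2 < e) (hq : c₁ * q.1 + c₂ * q.2 < e) :
    c₁ * x.1 + c₂ * x.2 < e := by
  obtain ⟨a, b, ha, hb, hab, hx⟩ := hx
  have h1 : x.1 = a * p.1 + b * q.1 := by rw [← hx]; rfl
  have h2 : x.2 = a * p.2 + b * q.2 := by rw [← hx]; rfl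
  have hxe : c₁ * x.1 + c₂ * x.2 = a * (c₁ * p.1 + c₂ * p.2) + b * (c₁ * q.1 + c₂ * q.2) := by
    rw [h1, h2]; ring
  rcases eq_or_lt_of_le ha with h0 | h0
  · have hb1 : b = 1 := by linarith
    rw [hxe, ← h0, hb1]; simpa using hq
  · have t1 : a * (c₁ * p.1 + c₂ * p.2) < a * e := by exact (mul_lt_mul_iff_right₀ h0).2 hp
    have t2 : b * (c₁ * q.1 + c₂ * q.2) ≤ b * e := mul_le_mul_of_nonneg_left hq.le hb
    have he : a * e + b * e = e := by rw [← add_mul, hab, one_mul]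
    rw [hxe]; linarith

lemma seg_lin_gt {c₁ c₂ e : ℝ} {p q x : ℝ × ℝ} (hx : x ∈ segment ℝ p q)
    (hp : e < c₁ * p.1 + c₂ * p.2) (hq : e < c₁ * q.1 + c₂ * q.2) :
    e < c₁ * x.1 + c₂ * x.2 := by
  have := seg_lin_lt (c₁ := -c₁) (c₂ := -c₂) (e := -e) hx (by linarith) (by linarith)
  linarith

/-- two segments from a common point `z`, with non-collinear data, meet only at `z` -/
lemma inter_seg_center {z p q x : ℝ × ℝ} (hcr : cross z p q ≠ 0)
    (h1 : x ∈ segment ℝ z p) (h2 : x ∈ segment ℝ z q) : x = z := by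
  obtain ⟨a, b, ha, hb, hab, hx⟩ := h1
  obtain ⟨c, dd, hc, hd, hcd, hy⟩ := h2
  have e1 : a * z.1 + b * p.1 = c * z.1 + dd * q.1 := by
    have := hx.trans hy.symm
    exact congrArg Prod.fst this
  have e2 : a * z.2 + b * p.2 = c * z.2 + dd * q.2 := by
    have := hx.trans hy.symm
    exact congrArg Prod.snd this
  -- rewrite with a = 1 - b, c = 1 - dd
  have f1 : b * (p.1 - z.1) = dd * (q.1 - z.1) := by
    have ha' : a = 1 - b := by linarith
    have hc' : c = 1 - dd := by linarith
    rw [ha', hc'] at e1; ring_nf at e1 ⊢; linarith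
  have f2 : b * (p.2 - z.2) = dd * (q.2 - z.2) := by
    have ha' : a = 1 - b := by linarith
    have hc' : c = 1 - dd := by linarith
    rw [ha', hc'] at e2; ring_nf at e2 ⊢; linarith
  have hb0 : b * cross z p q = 0 := by
    simp only [cross]
    linear_combination (q.2 - z.2) * f1 - (q.1 - z.1) * f2
  have hb' : b = 0 := by
    rcases mul_eq_zero.1 hb0 with h | h
    · exact h
    · exact absurd h hcr
  have ha1 : a = 1 := by linarith
  rw [← hx, hb', ha1]; simp

/-- strict separation by a line implies segments are disjoint -/
lemma disjoint_of_sep {c₁ c₂ e : ℝ} {p q r s : ℝ × ℝ}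
    (hp : c₁ * p.1 + c₂ * p.2 < e) (hq : c₁ * q.1 + c₂ * q.2 < e)
    (hr : e < c₁ * r.1 + c₂ * r.2) (hs : e < c₁ * s.1 + c₂ * s.2) :
    Disjoint (segment ℝ p q) (segment ℝ r s) := by
  rw [Set.disjoint_left]
  intro x hx1 hx2
  have h1 := seg_lin_lt hx1 hp hq
  have h2 := seg_lin_gt hx2 hr hs
  linarith

/-- a segment strictly on one side of the line through another segment: disjoint -/
lemma disjoint_of_side {p q r s : ℝ × ℝ}
    (hr : 0 < cross p q r) (hs : 0 < cross p q s) :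
    Disjoint (segment ℝ p q) (segment ℝ r s) := by
  rw [Set.disjoint_left]
  intro x hx1 hx2
  set c₁ : ℝ := -(q.2 - p.2) with hc₁
  set c₂ : ℝ := q.1 - p.1 with hc₂
  set e : ℝ := c₁ * p.1 + c₂ * p.2 with he
  have hLp : c₁ * p.1 + c₂ * p.2 = e := rfl
  have hLq : c₁ * q.1 + c₂ * q.2 = e := by rw [he, hc₁, hc₂]; ring
  have hLr : e < c₁ * r.1 + c₂ * r.2 := by
    have : c₁ * r.1 + c₂ * r.2 - e = cross p q r := by rw [he, hc₁, hc₂]; simp [cross]; ring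
    linarith
  have hLs : e < c₁ * s.1 + c₂ * s.2 := by
    have : c₁ * s.1 + c₂ * s.2 - e = cross p q s := by rw [he, hc₁, hc₂]; simp [cross]; ring
    linarith
  have h1 := seg_lin_eq hx1 hLp hLq
  have h2 := seg_lin_gt hx2 hLr hLs
  linarith


noncomputable def aPt (d T : ℝ) : ℝ × ℝ := (d * (2*T) / (1+T^2), d * (T^2-1) / (1+T^2))
noncomputable def bPt (T : ℝ) : ℝ × ℝ := ((1-T^2) / (1+T^2), (2*T) / (1+T^2))
noncomputable def fLin (V d : ℝ) (p : ℝ × ℝ) : ℝ :=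
  (-(2*V)) * p.1 + (1 - V^2) * p.2 + d * (V^2 - 2)

lemma den_pos (T : ℝ) : (0:ℝ) < 1 + T^2 := by positivity

/-! ### Line side conditions -/

lemma fb_eq (V d T : ℝ) : fLin V d (bPt T)
    = (2*(T-V)*(1+T*V) + d*(V^2-2)*(1+T^2)) / (1+T^2) := by
  have h1 := den_pos T
  simp only [fLin, bPt]; field_simp; ring

lemma fa_eq (V d T : ℝ) : fLin V d (aPt d T)
    = d * (2*V^2 - T^2 - 4*V*T - 3) / (1+T^2) := by
  have h1 := den_pos T
  simp only [fLin, aPt]; field_simp; ring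

lemma fb_pos {V d T : ℝ} (hV : 3 ≤ V) (hT : 4*V ≤ 3*T) (hd : 0 < d) :
    0 < fLin V d (bPt T) := by
  rw [fb_eq]
  apply div_pos _ (den_pos T)
  have hTV : V < T := by nlinarith
  have p1 : (0:ℝ) < 2*(T-V)*(1+T*V) := by
    apply mul_pos (by linarith : (0:ℝ) < 2*(T-V))
    nlinarith
  have p2 : (0:ℝ) < d*(V^2-2)*(1+T^2) :=
    mul_pos (mul_pos hd (by nlinarith : (0:ℝ) < V^2-2)) (den_pos T)
  linarith

lemma fb_neg {V d T : ℝ} (hT : 4 ≤ T) (hTV : 3*T ≤ V) (hd : 0 < d) (hdV : d * V ≤ 1) :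
    fLin V d (bPt T) < 0 := by
  rw [fb_eq]
  apply div_neg_of_neg_of_pos _ (den_pos T)
  -- need : 2(T-V)(1+TV) + d(V²-2)(1+T²) < 0, i.e. d(V²-2)(1+T²) < 2(V-T)(1+TV)
  have h1 : (0:ℝ) < 1 + T*V := by nlinarith
  have h2 : d*(V^2-2)*(1+T^2) ≤ d*V^2*(1+T*V) := by
    have : 1 + T^2 ≤ 1 + T*V := by nlinarith
    nlinarith [mul_pos hd (show (0:ℝ) < V^2 - 2 by nlinarith)]
  have h3 : d*V^2*(1+T*V) ≤ V*(1+T*V) := by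
    nlinarith [mul_le_mul_of_nonneg_right hdV (le_of_lt h1)]
  have h4 : V*(1+T*V) < 2*(V-T)*(1+T*V) := by nlinarith
  nlinarith

lemma fa_neg {V d T : ℝ} (hV : 3 ≤ V) (hT : 4*V ≤ 3*T) (hd : 0 < d) :
    fLin V d (aPt d T) < 0 := by
  rw [fa_eq]
  apply div_neg_of_neg_of_pos _ (den_pos T)
  have hTpos : (0:ℝ) < T := by nlinarith
  have hVpos : (0:ℝ) < V := by linarith
  have hm : 16*V^2 ≤ 12*(V*T) := by nlinarith [mul_le_mul_of_nonneg_left hT (le_of_lt hVpos)]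
  have hneg : 2*V^2 - T^2 - 4*V*T - 3 < 0 := by nlinarith [sq_nonneg T]
  exact mul_neg_of_pos_of_neg hd hneg

lemma fa_pos {V d T : ℝ} (hT : 4 ≤ T) (hTV : 3*T ≤ V) (hd : 0 < d) :
    0 < fLin V d (aPt d T) := by
  rw [fa_eq]
  apply div_pos _ (den_pos T)
  have : (0:ℝ) < 2*V^2 - T^2 - 4*V*T - 3 := by nlinarith
  positivity

/-! ### Disjointness side tests -/

lemma cross_abb' (d T U : ℝ) :
    cross (aPt d T) (bPt T) (bPt U)
      = 2*(U-T)*(1+T*U+d*(U-T)) / ((1+T^2)*(1+U^2)) := by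
  have h1 := den_pos T; have h2 := den_pos U
  simp only [cross, aPt, bPt]; field_simp; ring

lemma cross_aba' (d T U : ℝ) :
    cross (aPt d T) (bPt T) (aPt d U)
      = 2*d*(U-T)*((U-T) - d*(1+T*U)) / ((1+T^2)*(1+U^2)) := by
  have h1 := den_pos T; have h2 := den_pos U
  simp only [cross, aPt, bPt]; field_simp; ring

lemma disj_test1 {d T U : ℝ} (hT : 4 ≤ T) (hTU : 4*T ≤ U) (hd : 0 < d) :
    0 < cross (aPt d T) (bPt T) (bPt U) := by
  rw [cross_abb']
  have hUT : T < U := by nlinarith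
  apply div_pos _ (mul_pos (den_pos T) (den_pos U))
  have h1 : (0:ℝ) < U - T := by linarith
  have h2 : (0:ℝ) < 1 + T*U + d*(U-T) := by nlinarith [mul_pos hd h1]
  nlinarith [mul_pos h1 h2]

lemma disj_test2 {d T U : ℝ} (hT : 4 ≤ T) (hTU : 4*T ≤ U) (hd : 0 < d)
    (hsmall : d * (1 + T*U) < U - T) :
    0 < cross (aPt d T) (bPt T) (aPt d U) := by
  rw [cross_aba']
  apply div_pos _ (mul_pos (den_pos T) (den_pos U))
  have hUT : (0:ℝ) < U - T := by nlinarith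
  have := mul_pos (mul_pos (mul_pos (show (0:ℝ)<2 by norm_num) hd) hUT)
    (show (0:ℝ) < (U-T) - d*(1+T*U) by linarith)
  nlinarith [this]


/-! ### noncollinearity : determinant identities -/

lemma cross_aaa' (d T U W : ℝ) :
    cross (aPt d T) (aPt d U) (aPt d W)
      = 4*d^2*(U-T)*(W-T)*(W-U) / ((1+T^2)*(1+U^2)*(1+W^2)) := by
  have h1 := den_pos T; have h2 := den_pos U; have h3 := den_pos W
  simp only [cross, aPt]; field_simp; ring

lemma cross_bbb' (T U W : ℝ) :
    cross (bPt T) (bPt U) (bPt W)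
      = 4*(U-T)*(W-T)*(W-U) / ((1+T^2)*(1+U^2)*(1+W^2)) := by
  have h1 := den_pos T; have h2 := den_pos U; have h3 := den_pos W
  simp only [cross, bPt]; field_simp; ring

lemma cross_aab' (d T U W : ℝ) :
    cross (aPt d T) (aPt d U) (bPt W)
      = 2*d*(U-T)*((T+U)*(W^2-1) - 2*W*(T*U-1) + d*(1+W^2)*(1+T*U))
        / ((1+T^2)*(1+U^2)*(1+W^2)) := by
  have h1 := den_pos T; have h2 := den_pos U; have h3 := den_pos W
  simp only [cross, aPt, bPt]; field_simp; ring

lemma cross_abb2' (d T U W : ℝ) :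
    cross (aPt d T) (bPt U) (bPt W)
      = 2*(W-U)*((1+U*W)*(1+T^2) + d*((U+W)*(1-T^2) + 2*T*(U*W-1)))
        / ((1+T^2)*(1+U^2)*(1+W^2)) := by
  have h1 := den_pos T; have h2 := den_pos U; have h3 := den_pos W
  simp only [cross, aPt, bPt]; field_simp; ring

lemma cross_aabT' (d T U : ℝ) :
    cross (aPt d T) (aPt d U) (bPt T)
      = 2*d*(U-T)*(d*(1+T*U) - (U-T)) / ((1+T^2)*(1+U^2)) := by
  have h1 := den_pos T; have h2 := den_pos U
  simp only [cross, aPt, bPt]; field_simp; ring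

lemma cross_aabU' (d T U : ℝ) :
    cross (aPt d T) (aPt d U) (bPt U)
      = 2*d*(U-T)*(d*(1+T*U) + (U-T)) / ((1+T^2)*(1+U^2)) := by
  have h1 := den_pos T; have h2 := den_pos U
  simp only [cross, aPt, bPt]; field_simp; ring



lemma aab_n1 {d T U W : ℝ} (hW : 4 ≤ W) (hWT : 4*W ≤ T) (hTU : 4*T ≤ U)
    (hd : 0 < d) (hdT : d*T ≤ 1) :
    (T+U)*(W^2-1) - 2*W*(T*U-1) + d*(1+W^2)*(1+T*U) < 0 := by
  have hT : (4:ℝ) ≤ T := by linarith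
  have hU : (4:ℝ) ≤ U := by linarith
  have hWp : (0:ℝ) < W := by linarith
  have hTp : (0:ℝ) < T := by linarith
  have hUp : (0:ℝ) < U := by linarith
  have e1 : 8*(W^2*U) ≤ 2*W*(T*U) := by
    nlinarith [mul_le_mul_of_nonneg_right hWT (show (0:ℝ) ≤ W*U by positivity)]
  have e2 : (T+U)*W^2 ≤ (5/4)*(U*W^2) := by
    nlinarith [mul_le_mul_of_nonneg_right hTU (show (0:ℝ) ≤ W^2 by positivity)]
  have e3 : d*(1+W^2)*(1+T*U) ≤ 4*(W^2*U) := by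
    have h1 : 1+W^2 ≤ 2*W^2 := by nlinarith
    have h2 : 1+T*U ≤ 2*(T*U) := by nlinarith
    have h3 : d*(1+W^2)*(1+T*U) ≤ d*(2*W^2)*(2*(T*U)) := by
      apply mul_le_mul
      · exact mul_le_mul_of_nonneg_left h1 hd.le
      · exact h2
      · positivity
      · positivity
    have h4 : d*(2*W^2)*(2*(T*U)) = 4*(W^2*U)*(d*T) := by ring
    nlinarith [mul_le_mul_of_nonneg_left hdT (show (0:ℝ) ≤ 4*(W^2*U) by positivity)]
  have e4 : 2*W ≤ W^2*U := by
    nlinarith [mul_le_mul (show 4*W ≤ W^2 by nlinarith) hU (by norm_num : (0:ℝ) ≤ 4)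
      (by positivity : (0:ℝ) ≤ W^2)]
  nlinarith [mul_pos hWp hUp]

lemma aab_n2 {d T U W : ℝ} (hT : 4 ≤ T) (hTW : 4*T ≤ W) (hWU : 4*W ≤ U) (hd : 0 < d) :
    0 < (T+U)*(W^2-1) - 2*W*(T*U-1) + d*(1+W^2)*(1+T*U) := by
  have hW : (4:ℝ) ≤ W := by linarith
  have hU : (4:ℝ) ≤ U := by linarith
  have hTp : (0:ℝ) < T := by linarith
  have hWp : (0:ℝ) < W := by linarith
  have hUp : (0:ℝ) < U := by linarith
  have e0 : 0 < d*(1+W^2)*(1+T*U) := by positivity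
  have e1 : 4*(T*U*W) ≤ U*W^2 := by
    nlinarith [mul_le_mul_of_nonneg_right hTW (show (0:ℝ) ≤ U*W by positivity)]
  have e2 : 32*U ≤ 2*(T*U*W) := by
    have h1 : (64:ℝ) ≤ T*W := by
      nlinarith [mul_le_mul hT (show (16:ℝ) ≤ W by linarith) (by norm_num) (by linarith : (0:ℝ) ≤ T)]
    nlinarith [mul_le_mul_of_nonneg_right h1 hUp.le]
  nlinarith

lemma aab_n3 {d T U W : ℝ} (hT : 4 ≤ T) (hTU : 4*T ≤ U) (hUW : 4*U ≤ W) (hd : 0 < d) :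
    0 < (T+U)*(W^2-1) - 2*W*(T*U-1) + d*(1+W^2)*(1+T*U) := by
  have hU : (4:ℝ) ≤ U := by linarith
  have hW : (4:ℝ) ≤ W := by linarith
  have hTp : (0:ℝ) < T := by linarith
  have hWp : (0:ℝ) < W := by linarith
  have hUp : (0:ℝ) < U := by linarith
  have e0 : 0 < d*(1+W^2)*(1+T*U) := by positivity
  have e1 : 4*(U^2*W) ≤ U*W^2 := by
    nlinarith [mul_le_mul_of_nonneg_right hUW (show (0:ℝ) ≤ U*W by positivity)]
  have e2 : 16*(T*U*W) ≤ 4*(U^2*W) := by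
    nlinarith [mul_le_mul_of_nonneg_right hTU (show (0:ℝ) ≤ U*W by positivity)]
  have e3 : 32*U ≤ 2*(T*U*W) := by
    have h1 : (64:ℝ) ≤ T*W := by
      nlinarith [mul_le_mul hT (show (16:ℝ) ≤ W by linarith) (by norm_num) (by linarith : (0:ℝ) ≤ T)]
    nlinarith [mul_le_mul_of_nonneg_right h1 hUp.le]
  nlinarith

lemma abb_pos {d T U W : ℝ} (hT : 4 ≤ T) (hU : 4 ≤ U) (hW : 4 ≤ W)
    (hd : 0 < d) (hdU : d*U ≤ 1) (hdW : d*W ≤ 1) :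
    0 < (1+U*W)*(1+T^2) + d*((U+W)*(1-T^2) + 2*T*(U*W-1)) := by
  have hTp : (0:ℝ) < T := by linarith
  have hUp : (0:ℝ) < U := by linarith
  have hWp : (0:ℝ) < W := by linarith
  have e1 : 0 ≤ d*(2*T*(U*W-1)) := by
    have h2 : (0:ℝ) ≤ U*W - 1 := by nlinarith
    positivity
  have e2 : d*((U+W)*(T^2-1)) ≤ 2*(1+T^2) := by
    have h1 : d*(U+W) ≤ 2 := by
      have := mul_add d U W; nlinarith
    have h2 : (0:ℝ) ≤ T^2-1 := by nlinarith
    nlinarith [mul_le_mul_of_nonneg_right h1 h2]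
  have e3 : 3*(1+T^2) ≤ (1+U*W)*(1+T^2) := by
    nlinarith [sq_nonneg T, mul_le_mul hU hW (by norm_num) (by linarith : (0:ℝ) ≤ U)]
  nlinarith

noncomputable section
variable {k : ℕ}
def tP {k : ℕ} (j : Fin k) : ℝ := 4 ^ (j.val + 1)
def dP (k : ℕ) : ℝ := ((4:ℝ) ^ (4*k + 4))⁻¹
def vP {k : ℕ} (i : Fin k) : ℝ := 3 * 4 ^ i.val
variable {k : ℕ}

lemma four_pow_pos (n : ℕ) : (0:ℝ) < 4 ^ n := by positivity
lemma four_pow_le {m n : ℕ} (h : m ≤ n) : (4:ℝ) ^ m ≤ 4 ^ n :=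
  pow_le_pow_right₀ (by norm_num) h
lemma four_pow_lt {m n : ℕ} (h : m < n) : (4:ℝ) ^ m < 4 ^ n :=
  pow_lt_pow_right₀ (by norm_num) h

lemma tP_pos (j : Fin k) : 0 < tP j := four_pow_pos _
lemma tP_ge4 (j : Fin k) : 4 ≤ tP j := by
  have := four_pow_le (show 1 ≤ j.val + 1 by omega)
  simpa [tP] using this
lemma tP_leM (j : Fin k) : tP j ≤ 4 ^ k := four_pow_le (by omega)
lemma tP_mono {j l : Fin k} (h : j.val < l.val) : 4 * tP j ≤ tP l := by
  have h1 : (4:ℝ) * 4 ^ (j.val+1) = 4 ^ (j.val+2) := by ring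
  rw [tP, tP, h1]
  exact four_pow_le (by omega)
lemma dP_pos : 0 < dP k := by rw [dP]; positivity
lemma dP_le (n : ℕ) (h : n ≤ 4*k+4) : dP k * 4 ^ n ≤ 1 := by
  rw [dP, inv_mul_le_iff₀ (four_pow_pos _), mul_one]
  exact four_pow_le h
lemma dP_tP_le_one (j : Fin k) : dP k * tP j ≤ 1 := by
  have h1 : tP j ≤ 4 ^ (4*k+4) := four_pow_le (by omega)
  have h2 := dP_pos (k:=k)
  calc dP k * tP j ≤ dP k * 4 ^ (4*k+4) := by
        exact mul_le_mul_of_nonneg_left h1 h2.le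
    _ = 1 := by rw [dP]; field_simp
lemma dP_tP_small (j : Fin k) : dP k * tP j ≤ 1/256 := by
  have h1 : tP j * 256 ≤ 4 ^ (4*k+4) := by
    have : tP j * 256 = 4 ^ (j.val + 5) := by rw [tP]; ring
    rw [this]; exact four_pow_le (by omega)
  rw [dP, inv_mul_le_iff₀ (four_pow_pos _)]
  linarith
lemma dP_vP_le_one (i : Fin k) : dP k * vP i ≤ 1 := by
  have h1 : vP i ≤ 4 ^ (4*k+4) := by
    rw [vP]
    calc 3 * (4:ℝ) ^ i.val ≤ 4 * 4 ^ i.val := by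
          have := four_pow_pos (i.val); linarith
      _ = 4 ^ (i.val + 1) := by ring
      _ ≤ 4 ^ (4*k+4) := four_pow_le (by omega)
  calc dP k * vP i ≤ dP k * 4 ^ (4*k+4) := mul_le_mul_of_nonneg_left h1 (dP_pos).le
    _ = 1 := by rw [dP]; field_simp
lemma vP_ge3 (i : Fin k) : 3 ≤ vP i := by
  have := four_pow_le (show 0 ≤ i.val by omega)
  simp only [pow_zero] at this
  rw [vP]; nlinarith [four_pow_pos i.val]
lemma vP_le {i j : Fin k} (h : i.val ≤ j.val) : 4 * vP i ≤ 3 * tP j := by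
  rw [vP, tP]
  have : (4:ℝ) * (3 * 4 ^ i.val) = 3 * 4 ^ (i.val + 1) := by ring
  rw [this]
  have := four_pow_le (show i.val + 1 ≤ j.val + 1 by omega)
  nlinarith
lemma vP_ge {i j : Fin k} (h : j.val < i.val) : 3 * tP j ≤ vP i := by
  rw [vP, tP]
  have := four_pow_le (show j.val + 1 ≤ i.val by omega)
  nlinarith
lemma dP_gap {j l : Fin k} (h : j.val < l.val) :
    dP k * (1 + tP j * tP l) < tP l - tP j := by
  have hT := tP_ge4 j
  have hU := tP_ge4 l
  have hTU := tP_mono h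
  have hd := dP_pos (k:=k)
  have hsm := dP_tP_small j
  have hUp : (0:ℝ) < tP l := by linarith
  set T := tP j; set U := tP l
  have h1 : 1 + T*U ≤ 2*(T*U) := by nlinarith
  have h2 : dP k * (2*(T*U)) = 2*(dP k * T)*U := by ring
  have h3 : dP k * (1+T*U) ≤ 2*(dP k * T)*U := by
    rw [← h2]; exact mul_le_mul_of_nonneg_left h1 hd.le
  have h4 : 2*(dP k * T)*U ≤ 2*(1/256)*U := by
    apply mul_le_mul_of_nonneg_right _ hUp.le
    nlinarith
  have h5 : T ≤ U/4 := by linarith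
  nlinarith
/-! ### the points -/

def aP {k : ℕ} (j : Fin k) : ℝ × ℝ := aPt (dP k) (tP j)
def bP {k : ℕ} (j : Fin k) : ℝ × ℝ := bPt (tP j)

/-- the point family -/
def ptsP (k : ℕ) : Fin k × Bool → ℝ × ℝ := segPts aP bP

lemma ptsP_false (j : Fin k) : ptsP k (j, false) = aP j := rfl
lemma ptsP_true (j : Fin k) : ptsP k (j, true) = bP j := rfl

/-! ### side conditions for the separating lines -/

lemma side_pos (i : Fin k) (v : Fin k × Bool)
    (h : xor v.2 (decide (v.1 < i)) = true) :
    0 < fLin (vP i) (dP k) (ptsP k v) := by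
  obtain ⟨j, b⟩ := v
  by_cases hj : j < i
  · rw [Fin.lt_def] at hj
    cases b
    · -- a point, j < i : positive
      rw [ptsP_false, aP]
      exact fa_pos (tP_ge4 j) (vP_ge hj) dP_pos
    · simp [hj, Fin.lt_def] at h
  · rw [Fin.lt_def, not_lt] at hj
    cases b
    · simp [Fin.lt_def, not_lt.2 hj] at h
    · rw [ptsP_true, bP]
      exact fb_pos (vP_ge3 i) (vP_le hj) dP_pos

lemma side_neg (i : Fin k) (v : Fin k × Bool)
    (h : xor v.2 (decide (v.1 < i)) = false) :
    fLin (vP i) (dP k) (ptsP k v) < 0 := by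
  obtain ⟨j, b⟩ := v
  by_cases hj : j < i
  · rw [Fin.lt_def] at hj
    cases b
    · simp [hj, Fin.lt_def] at h
    · rw [ptsP_true, bP]
      exact fb_neg (tP_ge4 j) (vP_ge hj) dP_pos (dP_vP_le_one i)
  · rw [Fin.lt_def, not_lt] at hj
    cases b
    · rw [ptsP_false, aP]
      exact fa_neg (vP_ge3 i) (vP_le hj) dP_pos
    · simp [Fin.lt_def, not_lt.2 hj] at h

/-! ### noncollinearity wrappers (sorted versions) -/

lemma crs_aaa_sorted {i j l : Fin k} (h1 : i.val < j.val) (h2 : j.val < l.val) :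
    cross (aP i) (aP j) (aP l) ≠ 0 := by
  rw [aP, aP, aP, cross_aaa']
  have d1 := den_pos (tP i); have d2 := den_pos (tP j); have d3 := den_pos (tP l)
  have g1 : tP i < tP j := by have := tP_mono h1; have := tP_pos i; linarith
  have g2 : tP j < tP l := by have := tP_mono h2; have := tP_pos j; linarith
  have g3 : tP i < tP l := g1.trans g2
  have hd := dP_pos (k := k)
  apply ne_of_gt
  apply div_pos _ (by positivity)
  have : (0:ℝ) < dP k ^ 2 := by positivity
  nlinarith [mul_pos (mul_pos (show (0:ℝ) < tP j - tP i by linarith)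
    (show (0:ℝ) < tP l - tP i by linarith)) (show (0:ℝ) < tP l - tP j by linarith)]

lemma crs_bbb_sorted {i j l : Fin k} (h1 : i.val < j.val) (h2 : j.val < l.val) :
    cross (bP i) (bP j) (bP l) ≠ 0 := by
  rw [bP, bP, bP, cross_bbb']
  have g1 : tP i < tP j := by have := tP_mono h1; have := tP_pos i; linarith
  have g2 : tP j < tP l := by have := tP_mono h2; have := tP_pos j; linarith
  have g3 : tP i < tP l := g1.trans g2
  apply ne_of_gt
  apply div_pos _ (by positivity)
  nlinarith [mul_pos (mul_pos (show (0:ℝ) < tP j - tP i by linarith)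
    (show (0:ℝ) < tP l - tP i by linarith)) (show (0:ℝ) < tP l - tP j by linarith)]

lemma crs_aab_sorted {i j : Fin k} (hij : i.val < j.val) (l : Fin k) :
    cross (aP i) (aP j) (bP l) ≠ 0 := by
  have hd := dP_pos (k := k)
  have g1 : tP i < tP j := by have := tP_mono hij; have := tP_pos i; linarith
  have hUT : (0:ℝ) < tP j - tP i := by linarith
  rcases lt_trichotomy l.val i.val with hl | hl | hl
  · -- l < i : aab_n1, negative
    rw [aP, aP, bP, cross_aab']
    apply ne_of_lt
    apply div_neg_of_neg_of_pos _ (by positivity)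
    have hn := aab_n1 (d := dP k) (T := tP i) (U := tP j) (W := tP l)
      (tP_ge4 l) (tP_mono hl) (tP_mono hij) hd (dP_tP_le_one i)
    nlinarith [mul_pos (mul_pos (show (0:ℝ) < 2 * dP k by linarith) hUT) (neg_pos.2 hn)]
  · -- l = i
    have : l = i := Fin.ext hl
    subst this
    rw [aP, aP, bP, cross_aabT']
    apply ne_of_lt
    apply div_neg_of_neg_of_pos _ (by positivity)
    have hn : dP k * (1 + tP l * tP j) - (tP j - tP l) < 0 := by
      have := dP_gap hij; linarith
    nlinarith [mul_pos (mul_pos (show (0:ℝ) < 2 * dP k by linarith) hUT) (neg_pos.2 hn)]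
  · rcases lt_trichotomy l.val j.val with hl2 | hl2 | hl2
    · -- i < l < j : aab_n2, positive
      rw [aP, aP, bP, cross_aab']
      apply ne_of_gt
      apply div_pos _ (by positivity)
      have hn := aab_n2 (d := dP k) (T := tP i) (W := tP l) (U := tP j)
        (tP_ge4 i) (tP_mono hl) (tP_mono hl2) hd
      nlinarith [mul_pos (mul_pos (show (0:ℝ) < 2 * dP k by linarith) hUT) hn]
    · -- l = j
      have : l = j := Fin.ext hl2
      subst this
      rw [aP, aP, bP, cross_aabU']
      apply ne_of_gt
      apply div_pos _ (by positivity)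
      have hn : 0 < dP k * (1 + tP i * tP l) + (tP l - tP i) := by
        have h1 : (0:ℝ) < 1 + tP i * tP l := by
          nlinarith [tP_ge4 i, tP_ge4 l]
        nlinarith [mul_pos hd h1]
      nlinarith [mul_pos (mul_pos (show (0:ℝ) < 2 * dP k by linarith) hUT) hn]
    · -- j < l : aab_n3, positive
      rw [aP, aP, bP, cross_aab']
      apply ne_of_gt
      apply div_pos _ (by positivity)
      have hn := aab_n3 (d := dP k) (T := tP i) (U := tP j) (W := tP l)
        (tP_ge4 i) (tP_mono hij) (tP_mono hl2) hd
      nlinarith [mul_pos (mul_pos (show (0:ℝ) < 2 * dP k by linarith) hUT) hn]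

lemma crs_abb_sorted (i : Fin k) {j l : Fin k} (hjl : j.val < l.val) :
    cross (aP i) (bP j) (bP l) ≠ 0 := by
  have hd := dP_pos (k := k)
  have g1 : tP j < tP l := by have := tP_mono hjl; have := tP_pos j; linarith
  rw [aP, bP, bP, cross_abb2']
  apply ne_of_gt
  apply div_pos _ (by positivity)
  have hn := abb_pos (d := dP k) (T := tP i) (U := tP j) (W := tP l)
    (tP_ge4 i) (tP_ge4 j) (tP_ge4 l) hd (dP_tP_le_one j) (dP_tP_le_one l)
  nlinarith [mul_pos (show (0:ℝ) < 2 * (tP l - tP j) by linarith) hn]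

/-! ### unsorted wrappers -/

lemma cross_rot (p q r : ℝ × ℝ) : cross p q r = cross q r p := by
  simp only [cross]; ring

lemma crs_aaa_any {i j l : Fin k} (h1 : i ≠ j) (h2 : i ≠ l) (h3 : j ≠ l) :
    cross (aP i) (aP j) (aP l) ≠ 0 := by
  have v1 : i.val ≠ j.val := fun h => h1 (Fin.ext h)
  have v2 : i.val ≠ l.val := fun h => h2 (Fin.ext h)
  have v3 : j.val ≠ l.val := fun h => h3 (Fin.ext h)
  rcases lt_trichotomy i.val j.val with hij | hij | hij
  · rcases lt_trichotomy j.val l.val with hjl | hjl | hjl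
    · exact crs_aaa_sorted hij hjl
    · exact absurd hjl v3
    · rcases lt_trichotomy i.val l.val with hil | hil | hil
      · rw [cross_swap₂]; exact neg_ne_zero.2 (crs_aaa_sorted hil hjl)
      · exact absurd hil v2
      · rw [cross_rot, cross_rot]; exact crs_aaa_sorted hil hij
  · exact absurd hij v1
  · rcases lt_trichotomy i.val l.val with hil | hil | hil
    · rw [cross_swap₁]; exact neg_ne_zero.2 (crs_aaa_sorted hij hil)
    · exact absurd hil v2
    · rcases lt_trichotomy j.val l.val with hjl | hjl | hjl
      · rw [cross_rot]; exact crs_aaa_sorted hjl hil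
      · exact absurd hjl v3
      · rw [cross_rot, cross_rot, cross_swap₂]
        exact neg_ne_zero.2 (crs_aaa_sorted hjl hij)

lemma crs_bbb_any {i j l : Fin k} (h1 : i ≠ j) (h2 : i ≠ l) (h3 : j ≠ l) :
    cross (bP i) (bP j) (bP l) ≠ 0 := by
  have v1 : i.val ≠ j.val := fun h => h1 (Fin.ext h)
  have v2 : i.val ≠ l.val := fun h => h2 (Fin.ext h)
  have v3 : j.val ≠ l.val := fun h => h3 (Fin.ext h)
  rcases lt_trichotomy i.val j.val with hij | hij | hij
  · rcases lt_trichotomy j.val l.val with hjl | hjl | hjl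
    · exact crs_bbb_sorted hij hjl
    · exact absurd hjl v3
    · rcases lt_trichotomy i.val l.val with hil | hil | hil
      · rw [cross_swap₂]; exact neg_ne_zero.2 (crs_bbb_sorted hil hjl)
      · exact absurd hil v2
      · rw [cross_rot, cross_rot]; exact crs_bbb_sorted hil hij
  · exact absurd hij v1
  · rcases lt_trichotomy i.val l.val with hil | hil | hil
    · rw [cross_swap₁]; exact neg_ne_zero.2 (crs_bbb_sorted hij hil)
    · exact absurd hil v2
    · rcases lt_trichotomy j.val l.val with hjl | hjl | hjl
      · rw [cross_rot]; exact crs_bbb_sorted hjl hil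
      · exact absurd hjl v3
      · rw [cross_rot, cross_rot, cross_swap₂]
        exact neg_ne_zero.2 (crs_bbb_sorted hjl hij)

lemma crs_aab_any {i j : Fin k} (hij : i ≠ j) (l : Fin k) :
    cross (aP i) (aP j) (bP l) ≠ 0 := by
  have v1 : i.val ≠ j.val := fun h => hij (Fin.ext h)
  rcases lt_trichotomy i.val j.val with h | h | h
  · exact crs_aab_sorted h l
  · exact absurd h v1
  · rw [cross_swap₁]; exact neg_ne_zero.2 (crs_aab_sorted h l)

lemma crs_abb_any (i : Fin k) {j l : Fin k} (hjl : j ≠ l) :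
    cross (aP i) (bP j) (bP l) ≠ 0 := by
  have v1 : j.val ≠ l.val := fun h => hjl (Fin.ext h)
  rcases lt_trichotomy j.val l.val with h | h | h
  · exact crs_abb_sorted i h
  · exact absurd h v1
  · rw [cross_swap₂]; exact neg_ne_zero.2 (crs_abb_sorted i h)

/-! ### the master noncollinearity lemma -/

lemma cross_ne (u v w : Fin k × Bool) (huv : u ≠ v) (huw : u ≠ w) (hvw : v ≠ w) :
    cross (ptsP k u) (ptsP k v) (ptsP k w) ≠ 0 := by
  obtain ⟨ui, bu⟩ := u
  obtain ⟨vi, bv⟩ := v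
  obtain ⟨wi, bw⟩ := w
  cases bu <;> cases bv <;> cases bw <;>
    simp only [ptsP_false, ptsP_true]
  · -- a a a
    exact crs_aaa_any (fun h => huv (by rw [h])) (fun h => huw (by rw [h]))
      (fun h => hvw (by rw [h]))
  · -- a a b
    exact crs_aab_any (fun h => huv (by rw [h])) wi
  · -- a b a
    rw [cross_swap₂]
    exact neg_ne_zero.2 (crs_aab_any (fun h => huw (by rw [h])) vi)
  · -- a b b
    exact crs_abb_any ui (fun h => hvw (by rw [h]))
  · -- b a a
    rw [cross_rot]
    exact crs_aab_any (fun h => hvw (by rw [h])) ui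
  · -- b a b
    rw [cross_rot]
    exact crs_abb_any vi (fun h => (huw (by rw [h])).elim)
  · -- b b a
    rw [cross_rot, cross_rot]
    exact crs_abb_any wi (fun h => huv (by rw [h]))
  · -- b b b
    exact crs_bbb_any (fun h => huv (by rw [h])) (fun h => huw (by rw [h]))
      (fun h => hvw (by rw [h]))

/-! ### injectivity -/

lemma tP_inj {i j : Fin k} (h : tP i = tP j) : i = j := by
  rcases lt_trichotomy i.val j.val with hl | he | hl
  · have := four_pow_lt (show i.val + 1 < j.val + 1 by omega)
    rw [tP, tP] at h; linarith
  · exact Fin.ext he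
  · have := four_pow_lt (show j.val + 1 < i.val + 1 by omega)
    rw [tP, tP] at h; linarith

lemma aP_x_pos (j : Fin k) : 0 < (aP j).1 := by
  rw [aP, aPt]
  have h1 := tP_pos j
  have h2 := dP_pos (k := k)
  have := den_pos (tP j)
  positivity

lemma bP_x_neg (j : Fin k) : (bP j).1 < 0 := by
  rw [bP, bPt]
  apply div_neg_of_neg_of_pos _ (den_pos _)
  have := tP_ge4 j
  nlinarith

lemma aP_inj {i j : Fin k} (h : aP i = aP j) : i = j := by
  apply tP_inj
  have h1 : (aP i).1 = (aP j).1 := by rw [h]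
  rw [aP, aP, aPt, aPt] at h1
  simp only at h1
  have d1 := den_pos (tP i); have d2 := den_pos (tP j)
  have hd := dP_pos (k := k)
  have h2 : tP i * (1 + tP j ^ 2) = tP j * (1 + tP i ^ 2) := by
    field_simp at h1
    nlinarith [h1]
  have hTU : 1 < tP i * tP j := by nlinarith [tP_ge4 i, tP_ge4 j]
  nlinarith [tP_ge4 i, tP_ge4 j]

lemma bP_inj {i j : Fin k} (h : bP i = bP j) : i = j := by
  apply tP_inj
  have h1 : (bP i).1 = (bP j).1 := by rw [h]
  rw [bP, bP, bPt, bPt] at h1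
  simp only at h1
  have d1 := den_pos (tP i); have d2 := den_pos (tP j)
  have h2 : (1 - tP i ^ 2) * (1 + tP j ^ 2) = (1 - tP j ^ 2) * (1 + tP i ^ 2) := by
    field_simp at h1
    nlinarith [h1]
  have h3 : tP i ^ 2 = tP j ^ 2 := by nlinarith
  have := tP_pos i; have := tP_pos j
  nlinarith

lemma ptsP_inj : Function.Injective (ptsP k) := by
  rintro ⟨i, bi⟩ ⟨j, bj⟩ h
  cases bi <;> cases bj <;> simp only [ptsP_false, ptsP_true] at h
  · rw [aP_inj h]
  · exact absurd (h ▸ aP_x_pos i) (by simpa using (bP_x_neg j).not_gt)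
  · exact absurd (h ▸ bP_x_neg i) (by simpa using (aP_x_pos j).not_gt)
  · rw [bP_inj h]

/-! ### the star forests -/

def cB {k : ℕ} (i : Fin k) (v : Fin k × Bool) : Bool := xor v.2 (decide (v.1 < i))

lemma cB_center (i : Fin k) (t : Bool) {z : Fin k × Bool} (hz : z.1 = i) (ht : z.2 = t) :
    cB i z = t := by
  rw [cB, hz, ht]
  simp

def forestG (k : ℕ) (i : Fin k) : SimpleGraph (Fin k × Bool) where
  Adj u v := (u.1 = i ∧ v.1 ≠ i ∧ u.2 = cB i v) ∨ (v.1 = i ∧ u.1 ≠ i ∧ v.2 = cB i u)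
  symm := ⟨by intro u v h; tauto⟩
  loopless := ⟨by intro u h; rcases h with ⟨h1, h2, _⟩ | ⟨h1, h2, _⟩ <;> exact h2 h1⟩

def FF (k : ℕ) : Fin (k+1) → SimpleGraph (Fin k × Bool) :=
  fun i => if h : i.val < k then forestG k ⟨i.val, h⟩ else matchingGraph k

lemma FF_last {k : ℕ} : FF k ⟨k, lt_add_one k⟩ = matchingGraph k := dif_neg (by simp)

lemma FF_lt {k : ℕ} (i : Fin (k+1)) (h : i.val < k) : FF k i = forestG k ⟨i.val, h⟩ :=
  dif_pos h

lemma decompFF : ∀ u v : Fin k × Bool, u ≠ v → ∃! i : Fin (k+1), (FF k i).Adj u v := by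
  intro u v huv
  by_cases hc : u.1 = v.1
  · have hb : u.2 ≠ v.2 := fun h => huv (Prod.ext hc h)
    refine ⟨⟨k, lt_add_one k⟩, ?_, ?_⟩
    · show (FF k ⟨k, lt_add_one k⟩).Adj u v
      rw [FF_last]; exact ⟨hc, hb⟩
    · intro i hi
      by_cases h : i.val < k
      · rw [FF_lt i h] at hi
        rcases hi with ⟨h1, h2, _⟩ | ⟨h1, h2, _⟩
        · exact absurd (by rw [← hc]; exact h1) h2
        · exact absurd (by rw [hc]; exact h1) h2
      · exact Fin.ext (show i.val = k from by have := i.isLt; omega)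
  · -- u.1 ≠ v.1
    have hexcl : (u.2 = cB u.1 v) ↔ ¬ (v.2 = cB v.1 u) := by
      rcases lt_or_gt_of_ne (show u.1 ≠ v.1 from hc) with hlt | hlt
      · rw [cB, cB, decide_eq_false (asymm hlt), decide_eq_true hlt]
        cases u.2 <;> cases v.2 <;> simp
      · rw [cB, cB, decide_eq_true hlt, decide_eq_false (asymm hlt)]
        cases u.2 <;> cases v.2 <;> simp
    by_cases hcond : u.2 = cB u.1 v
    · -- center is u.1
      refine ⟨⟨u.1.val, by have := u.1.isLt; omega⟩, ?_, ?_⟩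
      · show (FF k ⟨u.1.val, _⟩).Adj u v
        rw [FF_lt _ (show (⟨u.1.val, by have := u.1.isLt; omega⟩ : Fin (k+1)).val < k from u.1.isLt)]
        left
        have he : (⟨u.1.val, u.1.isLt⟩ : Fin k) = u.1 := Fin.ext rfl
        refine ⟨Fin.ext rfl, fun h => hc (Fin.ext ?_), ?_⟩
        · have : v.1.val = u.1.val := congrArg Fin.val h
          omega
        · rw [show (⟨(⟨u.1.val, by have := u.1.isLt; omega⟩ : Fin (k+1)).val, u.1.isLt⟩ : Fin k) = u.1 from Fin.ext rfl]
          exact hcond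
      · intro i hi
        by_cases h : i.val < k
        · rw [FF_lt i h] at hi
          rcases hi with ⟨h1, _, _⟩ | ⟨h1, _, h3⟩
          · exact Fin.ext (show i.val = _ from by have := congrArg Fin.val h1; exact this.symm)
          · exfalso
            have hj : (⟨i.val, h⟩ : Fin k) = v.1 := h1.symm
            rw [hj] at h3
            exact (hexcl.1 hcond) h3
        · rw [show i = ⟨k, lt_add_one k⟩ from Fin.ext (show i.val = k from by have := i.isLt; omega), FF_last] at hi
          exact absurd hi.1 hc
    · -- center is v.1
      have hcond2 : v.2 = cB v.1 u := by
        by_contra hno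
        exact hcond (hexcl.2 hno)
      refine ⟨⟨v.1.val, by have := v.1.isLt; omega⟩, ?_, ?_⟩
      · show (FF k ⟨v.1.val, _⟩).Adj u v
        rw [FF_lt _ (show (⟨v.1.val, by have := v.1.isLt; omega⟩ : Fin (k+1)).val < k from v.1.isLt)]
        right
        refine ⟨Fin.ext rfl, fun h => hc (Fin.ext ?_), ?_⟩
        · have : u.1.val = v.1.val := congrArg Fin.val h
          omega
        · rw [show (⟨(⟨v.1.val, by have := v.1.isLt; omega⟩ : Fin (k+1)).val, v.1.isLt⟩ : Fin k) = v.1 from Fin.ext rfl]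
          exact hcond2
      · intro i hi
        by_cases h : i.val < k
        · rw [FF_lt i h] at hi
          rcases hi with ⟨h1, _, h3⟩ | ⟨h1, _, _⟩
          · exfalso
            have hj : (⟨i.val, h⟩ : Fin k) = u.1 := h1.symm
            rw [hj] at h3
            exact hcond h3
          · exact Fin.ext (show i.val = _ from by have := congrArg Fin.val h1; exact this.symm)
        · rw [show i = ⟨k, lt_add_one k⟩ from Fin.ext (show i.val = k from by have := i.isLt; omega), FF_last] at hi
          exact absurd hi.1 hc

lemma starForest_forest (i : Fin k) : IsStarForest (forestG k i) := by
  refine ⟨{p | p.1 = i}, ?_, ?_⟩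
  · intro u v h
    rcases h with ⟨h1, h2, _⟩ | ⟨h1, h2, _⟩
    · exact iff_of_true h1 h2
    · exact iff_of_false h2 (not_not_intro h1)
  · intro v hv u w h1 h2
    rcases h1 with ⟨hv1, _, _⟩ | ⟨hu1, _, hu2⟩
    · exact absurd hv1 hv
    · rcases h2 with ⟨hv1, _, _⟩ | ⟨hw1, _, hw2⟩
      · exact absurd hv1 hv
      · exact Prod.ext (hu1.trans hw1.symm) (hu2.trans hw2.symm)

lemma starForest_matching : IsStarForest (matchingGraph k) := by
  refine ⟨{p | p.2 = false}, ?_, ?_⟩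
  · intro u v h
    obtain ⟨_, h2⟩ := h
    constructor
    · intro hu hv
      exact h2 (by rw [hu]; exact hv.symm ▸ rfl)
    · intro hv
      simp only [Set.mem_setOf_eq] at hv ⊢
      cases hu2 : u.2
      · rfl
      · exfalso
        apply hv
        cases hv2 : v.2
        · rfl
        · exact absurd (hu2.trans hv2.symm) h2
  · intro v hv u w h1 h2
    obtain ⟨hu1, hu2⟩ := h1
    obtain ⟨hw1, hw2⟩ := h2
    simp only [Set.mem_setOf_eq] at hv
    have hv2 : v.2 = true := by
      cases h : v.2
      · exact absurd h hv
      · rfl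
    have : u.2 = false := by
      cases h : u.2
      · rfl
      · exact absurd (hv2.trans h.symm) hu2
    have hw : w.2 = false := by
      cases h : w.2
      · rfl
      · exact absurd (hv2.trans h.symm) hw2
    exact Prod.ext (hu1.symm.trans hw1) (this.trans hw.symm)

/-! ### planarity -/

lemma seg_fLin_pos {V d : ℝ} {p q x : ℝ × ℝ} (hx : x ∈ segment ℝ p q)
    (hp : 0 < fLin V d p) (hq : 0 < fLin V d q) : 0 < fLin V d x := by
  rw [fLin] at hp hq ⊢
  have hp' : -(d*(V^2-2)) < (-(2*V)) * p.1 + (1 - V^2) * p.2 := by linarith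
  have hq' : -(d*(V^2-2)) < (-(2*V)) * q.1 + (1 - V^2) * q.2 := by linarith
  have := seg_lin_gt hx hp' hq'
  linarith

lemma seg_fLin_neg {V d : ℝ} {p q x : ℝ × ℝ} (hx : x ∈ segment ℝ p q)
    (hp : fLin V d p < 0) (hq : fLin V d q < 0) : fLin V d x < 0 := by
  rw [fLin] at hp hq ⊢
  have hp' : (-(2*V)) * p.1 + (1 - V^2) * p.2 < -(d*(V^2-2)) := by linarith
  have hq' : (-(2*V)) * q.1 + (1 - V^2) * q.2 < -(d*(V^2-2)) := by linarith
  have := seg_lin_lt hx hp' hq'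
  linarith

lemma forest_core (i : Fin k) {za la zc lc : Fin k × Bool}
    (hza : za.1 = i) (hla : la.1 ≠ i) (hca : za.2 = cB i la)
    (hzc : zc.1 = i) (hlc : lc.1 ≠ i) (hcc : zc.2 = cB i lc)
    (hne : ¬ (za = zc ∧ la = lc)) {x : ℝ × ℝ}
    (h1 : x ∈ segment ℝ (ptsP k za) (ptsP k la))
    (h2 : x ∈ segment ℝ (ptsP k zc) (ptsP k lc)) :
    za = zc ∧ x = ptsP k za := by
  by_cases hzz : za.2 = zc.2
  · have hzazc : za = zc := Prod.ext (hza.trans hzc.symm) hzz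
    have hlalc : la ≠ lc := fun h => hne ⟨hzazc, h⟩
    have hzla : za ≠ la := fun h => hla (h ▸ hza)
    have hzlc : za ≠ lc := fun h => hlc (h ▸ hza)
    refine ⟨hzazc, ?_⟩
    apply inter_seg_center (cross_ne za la lc hzla hzlc hlalc) h1
    rw [hzazc]; exact h2
  · exfalso
    have hCa : cB i za = za.2 := cB_center i za.2 hza rfl
    have hCc : cB i zc = zc.2 := cB_center i zc.2 hzc rfl
    cases ha : za.2
    · have hc2 : zc.2 = true := by
        cases hcb : zc.2
        · exact absurd (ha.trans hcb.symm) hzz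
        · rfl
      have s1 : fLin (vP i) (dP k) x < 0 :=
        seg_fLin_neg h1 (side_neg i za (hCa.trans ha)) (side_neg i la (show cB i la = false by rw [← hca]; exact ha))
      have s2 : 0 < fLin (vP i) (dP k) x :=
        seg_fLin_pos h2 (side_pos i zc (hCc.trans hc2)) (side_pos i lc (show cB i lc = true by rw [← hcc]; exact hc2))
      linarith
    · have hc2 : zc.2 = false := by
        cases hcb : zc.2
        · rfl
        · exact absurd (ha.trans hcb.symm) hzz
      have s1 : 0 < fLin (vP i) (dP k) x :=
        seg_fLin_pos h1 (side_pos i za (hCa.trans ha)) (side_pos i la (show cB i la = true by rw [← hca]; exact ha))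
      have s2 : fLin (vP i) (dP k) x < 0 :=
        seg_fLin_neg h2 (side_neg i zc (hCc.trans hc2)) (side_neg i lc (show cB i lc = false by rw [← hcc]; exact hc2))
      linarith

lemma forest_plane (i : Fin k) : IsPlaneGraph (ptsP k) (forestG k i) := by
  intro a b c d hab hcd hne x hx1 hx2
  rcases hab with ⟨ha1, hb1, hab2⟩ | ⟨hb1, ha1, hba2⟩
  · rcases hcd with ⟨hc1, hd1, hcd2⟩ | ⟨hd1, hc1, hdc2⟩
    · have hne' : ¬ (a = c ∧ b = d) := fun ⟨e1, e2⟩ => hne (by rw [e1, e2])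
      obtain ⟨hac, hxa⟩ := forest_core i ha1 hb1 hab2 hc1 hd1 hcd2 hne' hx1 hx2
      exact ⟨Or.inl hxa, Or.inl (by rw [hxa, hac])⟩
    · have hne' : ¬ (a = d ∧ b = c) := fun ⟨e1, e2⟩ => hne (by rw [e1, e2, Sym2.eq_swap])
      rw [segment_symm] at hx2
      obtain ⟨hac, hxa⟩ := forest_core i ha1 hb1 hab2 hd1 hc1 hdc2 hne' hx1 hx2
      exact ⟨Or.inl hxa, Or.inr (by rw [hxa, hac])⟩
  · rcases hcd with ⟨hc1, hd1, hcd2⟩ | ⟨hd1, hc1, hdc2⟩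
    · have hne' : ¬ (b = c ∧ a = d) := fun ⟨e1, e2⟩ => hne (by rw [← e1, ← e2, Sym2.eq_swap])
      rw [segment_symm] at hx1
      obtain ⟨hac, hxa⟩ := forest_core i hb1 ha1 hba2 hc1 hd1 hcd2 hne' hx1 hx2
      exact ⟨Or.inr hxa, Or.inl (by rw [hxa, hac])⟩
    · have hne' : ¬ (b = d ∧ a = c) := fun ⟨e1, e2⟩ => hne (by rw [e1, e2])
      rw [segment_symm] at hx1 hx2
      obtain ⟨hac, hxa⟩ := forest_core i hb1 ha1 hba2 hd1 hc1 hdc2 hne' hx1 hx2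
      exact ⟨Or.inr hxa, Or.inr (by rw [hxa, hac])⟩

lemma bool_ne_eq {x y z : Bool} (h1 : x ≠ y) (h2 : x ≠ z) : y = z := by
  cases x <;> cases y <;> cases z <;> simp_all

lemma seg_disj {j l : Fin k} (h : j ≠ l) :
    Disjoint (segment ℝ (aP j) (bP j)) (segment ℝ (aP l) (bP l)) := by
  have hval : j.val ≠ l.val := fun hh => h (Fin.ext hh)
  rcases lt_trichotomy j.val l.val with hjl | hjl | hjl
  · apply disjoint_of_side
    · have := disj_test2 (tP_ge4 j) (tP_mono hjl) (dP_pos (k := k)) (dP_gap hjl)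
      simpa [aP, bP] using this
    · have := disj_test1 (tP_ge4 j) (tP_mono hjl) (dP_pos (k := k))
      simpa [aP, bP] using this
  · exact absurd hjl hval
  · apply Disjoint.symm
    apply disjoint_of_side
    · have := disj_test2 (tP_ge4 l) (tP_mono hjl) (dP_pos (k := k)) (dP_gap hjl)
      simpa [aP, bP] using this
    · have := disj_test1 (tP_ge4 l) (tP_mono hjl) (dP_pos (k := k))
      simpa [aP, bP] using this

lemma matching_plane : IsPlaneGraph (ptsP k) (matchingGraph k) := by
  intro a b c d hab hcd hne x hx1 hx2
  obtain ⟨hab1, hab2⟩ := hab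
  obtain ⟨hcd1, hcd2⟩ := hcd
  by_cases hac : a.1 = c.1
  · exfalso
    apply hne
    by_cases h2 : a.2 = c.2
    · have e1 : a = c := Prod.ext hac h2
      have e2 : b = d := by
        refine Prod.ext (by rw [← hab1, ← hcd1, hac]) ?_
        exact bool_ne_eq hab2 (h2 ▸ hcd2)
      rw [e1, e2]
    · have e1 : a = d := by
        refine Prod.ext (by rw [hac, hcd1]) ?_
        exact bool_ne_eq (fun hh => h2 hh.symm) hcd2
      have e2 : b = c := by
        refine Prod.ext (by rw [← hab1, hac]) ?_
        exact bool_ne_eq hab2 h2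
      rw [e1, e2, Sym2.eq_swap]
  · exfalso
    have hdisj := seg_disj (show a.1 ≠ c.1 from fun hh => hac hh)
    have hb1 : b.1 = a.1 := hab1.symm
    have hd1 : d.1 = c.1 := hcd1.symm
    have hseg1 : x ∈ segment ℝ (aP a.1) (bP a.1) := by
      cases ha2 : a.2
      · have hb2 : b.2 = true := by
          cases hh : b.2
          · exact absurd (ha2.trans hh.symm) hab2
          · rfl
        have ea : ptsP k a = aP a.1 := by
          rw [show a = (a.1, false) from Prod.ext rfl ha2]; rfl
        have eb : ptsP k b = bP a.1 := by
          rw [show b = (a.1, true) from Prod.ext hb1 hb2]; rfl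
        rw [← ea, ← eb]; exact hx1
      · have hb2 : b.2 = false := by
          cases hh : b.2
          · rfl
          · exact absurd (ha2.trans hh.symm) hab2
        have ea : ptsP k a = bP a.1 := by
          rw [show a = (a.1, true) from Prod.ext rfl ha2]; rfl
        have eb : ptsP k b = aP a.1 := by
          rw [show b = (a.1, false) from Prod.ext hb1 hb2]; rfl
        rw [segment_symm, ← ea, ← eb]; exact hx1
    have hseg2 : x ∈ segment ℝ (aP c.1) (bP c.1) := by
      cases hc2 : c.2
      · have hd2 : d.2 = true := by
          cases hh : d.2
          · exact absurd (hc2.trans hh.symm) hcd2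
          · rfl
        have ec : ptsP k c = aP c.1 := by
          rw [show c = (c.1, false) from Prod.ext rfl hc2]; rfl
        have ed : ptsP k d = bP c.1 := by
          rw [show d = (c.1, true) from Prod.ext hd1 hd2]; rfl
        rw [← ec, ← ed]; exact hx2
      · have hd2 : d.2 = false := by
          cases hh : d.2
          · rfl
          · exact absurd (hc2.trans hh.symm) hcd2
        have ec : ptsP k c = bP c.1 := by
          rw [show c = (c.1, true) from Prod.ext rfl hc2]; rfl
        have ed : ptsP k d = aP c.1 := by
          rw [show d = (c.1, false) from Prod.ext hd1 hd2]; rfl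
        rw [segment_symm, ← ec, ← ed]; exact hx2
    exact (Set.disjoint_left.1 hdisj hseg1) hseg2

end
end SFAux

/-- For every `k ≥ 1` there exists an SF-extendable arrangement of `k` pairwise disjoint
segments whose `2 * k` endpoints are in general position. -/
theorem exists_sf_extendable_arrangement (k : ℕ) (hk : 1 ≤ k) :
    ∃ A B : Fin k → ℝ × ℝ, GenPos (segPts A B) ∧
      (∀ i j : Fin k, i ≠ j →
        Disjoint (segment ℝ (A i) (B i)) (segment ℝ (A j) (B j))) ∧
      SFExtendable A B := by
  refine ⟨SFAux.aP, SFAux.bP, ⟨?_, ?_⟩, ?_, ?_⟩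
  · exact SFAux.ptsP_inj
  · intro u v w h1 h2 h3
    exact SFAux.not_collinear_of_cross (SFAux.cross_ne u v w h1 h2 h3)
  · intro i j h
    exact SFAux.seg_disj h
  · refine ⟨SFAux.FF k, ⟨SFAux.decompFF, ?_, ?_⟩, ⟨⟨k, lt_add_one k⟩, SFAux.FF_last⟩⟩
    · intro i
      by_cases h : i.val < k
      · rw [SFAux.FF_lt i h]; exact SFAux.starForest_forest _
      · rw [show SFAux.FF k i = matchingGraph k from dif_neg h]
        exact SFAux.starForest_matching
    · intro i
      by_cases h : i.val < k
      · rw [SFAux.FF_lt i h]; exact SFAux.forest_plane _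
      · rw [show SFAux.FF k i = matchingGraph k from dif_neg h]
        exact SFAux.matching_plane
end
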